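/- arXiv:2210.09123 — 7 statements merged into one kernel-verified Lean document; each statement's English description precedes it below -/
import Mathlib

section
/- For every real number α that is not an integer, the series ∑_{n=-∞}^{∞} (-1)^n/(α+n) converges to π/sin(απ). -/
open Real Filter MeasureTheory intervalIntegral

section SumAlternatingCscAux

private lemma intInt_aux' (c : ℝ) (hc : -1 < c) (g : ℝ → ℝ) (hg : ContinuousOn g (Set.uIcc 0 1)) :
    IntervalIntegrable (fun x : ℝ => x ^ c * g x) volume 0 1 :=
  (intervalIntegrable_rpow' hc).mul_continuousOn hg

private lemma one_add_pos'' : ∀ x ∈ Set.uIcc (0:ℝ) 1, (0:ℝ) < 1 + x := by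
  intro x hx
  simp [Set.uIcc_of_le (by norm_num : (0:ℝ) ≤ 1)] at hx
  linarith [hx.1]

private lemma hint_aux' (c : ℝ) (hc : -1 < c) :
    IntervalIntegrable (fun x : ℝ => x ^ c / (1+x)) volume 0 1 := by
  simpa [div_eq_mul_inv] using intInt_aux' c hc _
    (ContinuousOn.inv₀ (by fun_prop) (fun x hx => ne_of_gt (one_add_pos'' x hx)))

private lemma L1' (b : ℝ) (hb : 0 < b) :
    Tendsto (fun N : ℕ => ∑ n ∈ Finset.range N, (-1 : ℝ) ^ n / (b + n)) atTop
      (nhds (∫ x in (0:ℝ)..1, x ^ (b-1) / (1+x))) := by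
  have hintb : ∀ n : ℕ, IntervalIntegrable (fun x : ℝ => (-1:ℝ)^n * x ^ (b + n - 1)) volume 0 1 := by
    intro n
    exact (intervalIntegrable_rpow' (by have : (0:ℝ) ≤ n := Nat.cast_nonneg n; linarith)).const_mul _
  have key : ∀ N : ℕ, (∫ x in (0:ℝ)..1, x ^ (b-1) / (1+x)) - ∑ n ∈ Finset.range N, (-1 : ℝ) ^ n / (b + n)
      = ∫ x in (0:ℝ)..1, x ^ (b-1) * ((-x) ^ N / (1+x)) := by
    intro N
    have h1 : ∀ n : ℕ, (-1 : ℝ) ^ n / (b + n) = ∫ x in (0:ℝ)..1, (-1:ℝ)^n * x ^ (b + n - 1) := by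
      intro n
      have hn : (0:ℝ) ≤ n := Nat.cast_nonneg n
      rw [intervalIntegral.integral_const_mul, integral_rpow (Or.inl (by linarith))]
      rw [Real.one_rpow, Real.zero_rpow (by intro h; nlinarith)]
      ring_nf
    have h2 : ∑ n ∈ Finset.range N, (-1 : ℝ) ^ n / (b + n)
        = ∫ x in (0:ℝ)..1, ∑ n ∈ Finset.range N, (-1:ℝ)^n * x ^ (b + n - 1) := by
      rw [intervalIntegral.integral_finset_sum (fun n _ => hintb n)]
      exact Finset.sum_congr rfl fun n _ => h1 n
    have hsumint : IntervalIntegrable (fun x : ℝ => ∑ n ∈ Finset.range N, (-1:ℝ)^n * x ^ (b + n - 1)) volume 0 1 := by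
      have h := IntervalIntegrable.sum (μ := volume) (a := 0) (b := 1) (Finset.range N)
        (f := fun n => fun x : ℝ => (-1:ℝ)^n * x ^ (b + n - 1)) (fun n _ => hintb n)
      have he : (fun x : ℝ => ∑ n ∈ Finset.range N, (-1:ℝ)^n * x ^ (b + n - 1))
          = ∑ n ∈ Finset.range N, fun x : ℝ => (-1:ℝ)^n * x ^ (b + n - 1) := by
        ext x; simp
      rw [he]; exact h
    rw [h2, ← intervalIntegral.integral_sub (hint_aux' (b-1) (by linarith)) hsumint]
    apply intervalIntegral.integral_congr_ae
    filter_upwards [] with x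
    intro hx
    rw [Set.uIoc_of_le (by norm_num : (0:ℝ) ≤ 1)] at hx
    obtain ⟨hx0, hx1⟩ := hx
    have h1x : (0:ℝ) < 1 + x := by linarith
    have hgeom : ∑ n ∈ Finset.range N, (-x)^n = (1 - (-x)^N) / (1+x) := by
      rw [geom_sum_eq (by intro h; rw [neg_eq_iff_eq_neg] at h; linarith [h ▸ hx0]),
        div_eq_div_iff (by linarith) (by linarith)]
      ring
    have hterm : ∀ n ∈ Finset.range N, (-1:ℝ)^n * x ^ (b + n - 1) = x ^ (b-1) / (1+x) * (1+x) * (-x)^n := by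
      intro n _
      have hp : x ^ (b + n - 1) = x ^ (b-1) * x ^ (n:ℕ) := by
        rw [← Real.rpow_natCast x n, ← Real.rpow_add hx0]; ring_nf
      rw [hp, show ((-x):ℝ)^n = (-1)^n * x^n from by rw [neg_pow]]
      field_simp
    rw [Finset.sum_congr rfl hterm, ← Finset.mul_sum, hgeom]
    field_simp
    ring
  have hbound : ∀ N : ℕ, |(∫ x in (0:ℝ)..1, x ^ (b-1) / (1+x)) - ∑ n ∈ Finset.range N, (-1 : ℝ) ^ n / (b + n)|
      ≤ 1 / (b + N) := by
    intro N
    rw [key N]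
    have hN : (0:ℝ) ≤ N := Nat.cast_nonneg N
    have hremint : IntervalIntegrable (fun x : ℝ => x ^ (b-1) * ((-x) ^ N / (1+x))) volume 0 1 :=
      intInt_aux' (b-1) (by linarith) _ (ContinuousOn.div (by fun_prop) (by fun_prop)
        (fun x hx => ne_of_gt (one_add_pos'' x hx)))
    calc |∫ x in (0:ℝ)..1, x ^ (b-1) * ((-x) ^ N / (1+x))|
        ≤ ∫ x in (0:ℝ)..1, |x ^ (b-1) * ((-x) ^ N / (1+x))| :=
          intervalIntegral.abs_integral_le_integral_abs (by norm_num)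
      _ ≤ ∫ x in (0:ℝ)..1, x ^ (b + N - 1) := by
          apply intervalIntegral.integral_mono_ae_restrict (by norm_num) hremint.abs
            (intervalIntegrable_rpow' (by linarith))
          have h0 : ∀ᵐ x : ℝ, x ≠ (0:ℝ) := by
            rw [MeasureTheory.ae_iff]
            convert Real.volume_singleton (a := (0:ℝ)) using 2
            ext x; simp
          filter_upwards [h0.filter_mono (ae_mono Measure.restrict_le_self),
            ae_restrict_mem measurableSet_Icc] with x hx0 hx
          obtain ⟨hxl, hxr⟩ := hx
          have hxpos : 0 < x := lt_of_le_of_ne hxl (Ne.symm hx0)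
          have h1x : (0:ℝ) < 1 + x := by linarith
          have hp : x ^ (b + N - 1) = x ^ (b-1) * x ^ (N:ℕ) := by
            rw [← Real.rpow_natCast x N, ← Real.rpow_add hxpos]; ring_nf
          rw [hp, abs_mul, abs_of_nonneg (Real.rpow_nonneg hxpos.le _), abs_div, abs_pow, abs_neg,
            abs_of_nonneg hxpos.le, abs_of_nonneg h1x.le]
          have h1 : x ^ (N:ℕ) / (1+x) ≤ x ^ (N:ℕ) := by
            apply div_le_self (pow_nonneg hxpos.le N); linarith
          exact mul_le_mul_of_nonneg_left h1 (Real.rpow_nonneg hxpos.le _)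
      _ = 1 / (b + N) := by
          rw [integral_rpow (Or.inl (by linarith)), Real.one_rpow,
            Real.zero_rpow (by intro hc; nlinarith)]
          ring
  rw [← tendsto_sub_nhds_zero_iff]
  apply squeeze_zero_norm (fun N => by simpa [abs_sub_comm] using hbound N)
  have : Tendsto (fun N : ℕ => b + (N:ℝ)) atTop atTop :=
    tendsto_atTop_add_const_left _ _ tendsto_natCast_atTop_atTop
  have h2 : Tendsto (fun N : ℕ => (b + (N:ℝ))⁻¹) atTop (nhds 0) := this.inv_tendsto_atTop
  simpa [one_div] using h2

private lemma beta_val' (β : ℝ) (h0 : 0 < β) (h1 : β < 1) :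
    ∫ x in (0:ℝ)..1, x ^ (β-1) * (1-x) ^ (-β) = π / Real.sin (π * β) := by
  have hc := Complex.Gamma_mul_Gamma_eq_betaIntegral (s := (β:ℂ)) (t := ((1-β:ℝ):ℂ))
    (by simpa using h0) (by simp [h1])
  have hsum : (β:ℂ) + ((1-β:ℝ):ℂ) = 1 := by push_cast; ring
  rw [hsum, Complex.Gamma_one, one_mul, Complex.Gamma_ofReal, Complex.Gamma_ofReal,
    ← Complex.ofReal_mul, Real.Gamma_mul_Gamma_one_sub] at hc
  have hbeta : Complex.betaIntegral (β:ℂ) ((1-β:ℝ):ℂ)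
      = ((∫ x in (0:ℝ)..1, x ^ (β-1) * (1-x) ^ (-β) : ℝ) : ℂ) := by
    rw [Complex.betaIntegral, ← intervalIntegral.integral_ofReal]
    apply intervalIntegral.integral_congr_ae
    filter_upwards [] with x
    intro hx
    rw [Set.uIoc_of_le (by norm_num : (0:ℝ) ≤ 1)] at hx
    obtain ⟨hx0, hx1⟩ := hx
    push_cast
    rw [show ((β:ℂ) - 1) = (((β - 1 : ℝ)):ℂ) by push_cast; ring,
      show ((1:ℂ) - (β:ℂ) - 1) = (((-β : ℝ)):ℂ) by push_cast; ring,
      show ((1:ℂ) - (x:ℂ)) = (((1 - x : ℝ)):ℂ) by push_cast; ring,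
      ← Complex.ofReal_cpow hx0.le, ← Complex.ofReal_cpow (by linarith), ← Complex.ofReal_mul]
  rw [hbeta] at hc
  exact_mod_cast hc.symm

private lemma Lsub' (c : ℝ) :
    ∫ x in Set.Ioo (0:ℝ) 1, x ^ c / (1+x) = ∫ y in Set.Ioo (0:ℝ) (1/2), y ^ c * (1-y) ^ (-c-1) := by
  have himg : (fun y : ℝ => y / (1-y)) '' Set.Ioo (0:ℝ) (1/2) = Set.Ioo (0:ℝ) 1 := by
    ext x
    constructor
    · rintro ⟨y, ⟨hy0, hy1⟩, rfl⟩
      have h1y : 0 < 1 - y := by linarith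
      constructor
      · positivity
      · rw [div_lt_one h1y]; linarith
    · rintro ⟨hx0, hx1⟩
      refine ⟨x / (1+x), ⟨by positivity, ?_⟩, ?_⟩
      · rw [div_lt_iff₀ (by linarith)]; linarith
      · have h1x : (0:ℝ) < 1 + x := by linarith
        field_simp
        ring
  have hderiv : ∀ y ∈ Set.Ioo (0:ℝ) (1/2),
      HasDerivWithinAt (fun y : ℝ => y / (1-y)) ((1-y)⁻¹ ^ 2) (Set.Ioo (0:ℝ) (1/2)) y := by
    intro y ⟨hy0, hy1⟩
    have h1y : (1:ℝ) - y ≠ 0 := by intro h; linarith [h]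
    have : HasDerivAt (fun y : ℝ => y / (1-y)) ((1 * (1-y) - y * (0 - 1)) / (1-y)^2) y :=
      (hasDerivAt_id y).div ((hasDerivAt_const y 1).sub (hasDerivAt_id y)) h1y
    have h2 : (1 * (1-y) - y * (0 - 1)) / (1-y)^2 = (1-y)⁻¹ ^ 2 := by
      field_simp
      ring
    rw [h2] at this
    exact this.hasDerivWithinAt
  have hinj : Set.InjOn (fun y : ℝ => y / (1-y)) (Set.Ioo (0:ℝ) (1/2)) := by
    intro a ⟨ha0, ha1⟩ b ⟨hb0, hb1⟩ hab
    simp only at hab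
    have h1 : (1:ℝ) - a ≠ 0 := by intro h; linarith
    have h2 : (1:ℝ) - b ≠ 0 := by intro h; linarith
    field_simp at hab
    linarith
  rw [← himg, MeasureTheory.integral_image_eq_integral_abs_deriv_smul measurableSet_Ioo hderiv hinj]
  apply MeasureTheory.setIntegral_congr_fun measurableSet_Ioo
  intro y ⟨hy0, hy1⟩
  have h1y : (0:ℝ) < 1 - y := by linarith
  have hfy : (0:ℝ) < y / (1-y) := by positivity
  simp only [smul_eq_mul]
  rw [abs_of_pos (by positivity), Real.div_rpow hy0.le h1y.le]
  rw [show (1:ℝ) + y/(1-y) = (1-y)⁻¹ by field_simp; ring]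
  rw [Real.rpow_sub h1y, Real.rpow_neg h1y.le, Real.rpow_one]
  have hyc : (0:ℝ) < y ^ c := Real.rpow_pos_of_pos hy0 c
  have h1yc : (0:ℝ) < (1-y) ^ c := Real.rpow_pos_of_pos h1y c
  field_simp

private lemma L2' (β : ℝ) (h0 : 0 < β) (h1 : β < 1) :
    (∫ x in (0:ℝ)..1, x ^ (β-1) / (1+x)) + (∫ x in (0:ℝ)..1, x ^ ((1-β)-1) / (1+x))
      = π / Real.sin (π * β) := by
  have conv : ∀ c : ℝ, (∫ x in (0:ℝ)..1, x ^ c / (1+x)) = ∫ y in (0:ℝ)..(1/2), y ^ c * (1-y) ^ (-c-1) := by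
    intro c
    rw [intervalIntegral.integral_of_le (by norm_num : (0:ℝ) ≤ 1),
      intervalIntegral.integral_of_le (by norm_num : (0:ℝ) ≤ 1/2),
      MeasureTheory.integral_Ioc_eq_integral_Ioo, MeasureTheory.integral_Ioc_eq_integral_Ioo]
    exact Lsub' c
  rw [conv, conv]
  have e1 : (fun y : ℝ => y ^ (β-1) * (1-y) ^ (-(β-1)-1)) = fun y : ℝ => y ^ (β-1) * (1-y) ^ (-β) := by
    ext y; ring_nf
  have e2 : (fun y : ℝ => y ^ ((1-β)-1) * (1-y) ^ (-((1-β)-1)-1)) = fun y : ℝ => y ^ (-β) * (1-y) ^ (β-1) := by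
    ext y; ring_nf
  have hcont : ∀ d : ℝ, ContinuousOn (fun x : ℝ => (1-x) ^ d) (Set.uIcc (0:ℝ) (1/2)) := by
    intro d
    apply ContinuousOn.rpow_const (by fun_prop)
    intro x hx
    left
    rw [Set.uIcc_of_le (by norm_num : (0:ℝ) ≤ 1/2)] at hx
    intro h; rw [sub_eq_zero] at h; rw [← h] at hx; norm_num at hx
  have hi1 : IntervalIntegrable (fun y : ℝ => y ^ (β-1) * (1-y) ^ (-β)) volume 0 (1/2) :=
    (intervalIntegrable_rpow' (by linarith)).mul_continuousOn (hcont (-β))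
  have hi2 : IntervalIntegrable (fun y : ℝ => y ^ (-β) * (1-y) ^ (β-1)) volume 0 (1/2) :=
    (intervalIntegrable_rpow' (by linarith)).mul_continuousOn (hcont (β-1))
  have hrefl : (∫ y in (0:ℝ)..(1/2), y ^ (-β) * (1-y) ^ (β-1))
      = ∫ x in (1/2:ℝ)..1, x ^ (β-1) * (1-x) ^ (-β) := by
    have := intervalIntegral.integral_comp_sub_left (a := (1/2:ℝ)) (b := 1)
      (fun y : ℝ => y ^ (-β) * (1-y) ^ (β-1)) 1
    norm_num at this
    rw [← this]
    apply intervalIntegral.integral_congr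
    intro x _
    simp only
    ring
  rw [e1, e2, hrefl]
  rw [← beta_val' β h0 h1]
  apply intervalIntegral.integral_add_adjacent_intervals hi1
  have h := hi2.comp_sub_left 1
  norm_num at h
  rw [show (fun x : ℝ => x ^ (β-1) * (1-x) ^ (-β)) = fun x : ℝ => (1-x) ^ (-β) * x ^ (β-1) from by
    ext x; ring]
  exact h.symm

private noncomputable def S' (α : ℝ) (N : ℕ) : ℝ :=
  ∑ n ∈ Finset.Icc (-(N : ℤ)) (N : ℤ), (-1 : ℝ) ^ n / (α + n)

private noncomputable def bterm' (α : ℝ) (m : ℤ) : ℝ := (-1:ℝ)^m / (α + (m : ℝ))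

private lemma S_eq' (α : ℝ) (N : ℕ) :
    S' α N = ∑ n ∈ Finset.Icc (-(N : ℤ)) (N : ℤ), bterm' α n := rfl

private lemma split_lemma' (f : ℤ → ℝ) (N : ℕ) :
    ∑ n ∈ Finset.Icc (-(N : ℤ)) (N : ℤ), f n
      = ∑ i ∈ Finset.range (N+1), f i + ∑ i ∈ Finset.range N, f (-(i+1)) := by
  have hu : Finset.Icc (-(N : ℤ)) (N : ℤ) = Finset.Icc (0:ℤ) N ∪ Finset.Icc (-(N:ℤ)) (-1) := by
    ext m; simp only [Finset.mem_Icc, Finset.mem_union]; omega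
  have hd : Disjoint (Finset.Icc (0:ℤ) N) (Finset.Icc (-(N:ℤ)) (-1)) := by
    rw [Finset.disjoint_left]; intro m hm hm'
    simp only [Finset.mem_Icc] at hm hm'; omega
  have e1 : ∑ n ∈ Finset.Icc (0:ℤ) N, f n = ∑ i ∈ Finset.range (N+1), f i := by
    refine Finset.sum_nbij' (i := fun a => a.toNat) (j := fun i => (i:ℤ)) ?_ ?_ ?_ ?_ ?_
    · intro a ha; simp only [Finset.mem_Icc] at ha; simp only [Finset.mem_range]; omega
    · intro i hi; simp only [Finset.mem_range] at hi; simp only [Finset.mem_Icc]; beta_reduce; omega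
    · intro a ha; simp only [Finset.mem_Icc] at ha; beta_reduce; omega
    · intro i _; beta_reduce; omega
    · intro a ha; simp only [Finset.mem_Icc] at ha; congr 1; beta_reduce; omega
  have e2 : ∑ n ∈ Finset.Icc (-(N:ℤ)) (-1), f n = ∑ i ∈ Finset.range N, f (-(i+1)) := by
    refine Finset.sum_nbij' (i := fun a => (-(a+1)).toNat) (j := fun i => -((i:ℤ)+1)) ?_ ?_ ?_ ?_ ?_
    · intro a ha; simp only [Finset.mem_Icc] at ha; simp only [Finset.mem_range]; beta_reduce; omega
    · intro i hi; simp only [Finset.mem_range] at hi; simp only [Finset.mem_Icc]; beta_reduce; omega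
    · intro a ha; simp only [Finset.mem_Icc] at ha; beta_reduce; omega
    · intro i _; beta_reduce; omega
    · intro a ha; simp only [Finset.mem_Icc] at ha; congr 1; beta_reduce; omega
  rw [hu, Finset.sum_union hd, e1, e2]

private lemma S_split' (β : ℝ) (N : ℕ) :
    S' β N = (∑ i ∈ Finset.range (N+1), (-1:ℝ)^i / (β + i))
      + ∑ i ∈ Finset.range N, (-1:ℝ)^i / ((1-β) + i) := by
  rw [S', split_lemma']
  have ha : ∀ i : ℕ, (-1:ℝ) ^ ((i:ℤ)) / (β + ((i:ℤ):ℝ)) = (-1:ℝ)^i / (β + i) := by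
    intro i
    rw [zpow_natCast]
    norm_num
  have hb : ∀ i : ℕ, (-1:ℝ) ^ (-((i:ℤ)+1)) / (β + ((-((i:ℤ)+1) : ℤ):ℝ)) = (-1:ℝ)^i / ((1-β) + i) := by
    intro i
    have h1 : (-1:ℝ) ^ (-((i:ℤ)+1)) = -(-1:ℝ)^i := by
      rw [zpow_neg, show ((i:ℤ)+1) = ((i+1:ℕ):ℤ) by push_cast; ring, zpow_natCast, ← inv_pow]
      norm_num [pow_succ]
    have h2 : β + ((-((i:ℤ)+1) : ℤ):ℝ) = -((1-β) + i) := by push_cast; ring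
    rw [h1, h2, neg_div, div_neg, neg_neg]
  rw [Finset.sum_congr rfl (fun i _ => ha i), Finset.sum_congr rfl (fun i _ => hb i)]

private lemma S_shift' (α : ℝ) (N : ℕ) :
    S' (α+1) N = -(S' α N) + bterm' α (-(N:ℤ)) - bterm' α ((N:ℤ)+1) := by
  have hA : ∀ n : ℤ, bterm' (α+1) n = -(bterm' α (n+1)) := by
    intro n
    rw [bterm', bterm', zpow_add₀ (by norm_num : (-1:ℝ) ≠ 0), zpow_one]
    push_cast
    ring
  have h1 : S' (α+1) N = -∑ m ∈ Finset.Icc (-(N:ℤ)+1) ((N:ℤ)+1), bterm' α m := by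
    rw [S_eq', Finset.sum_congr rfl (fun n _ => hA n), Finset.sum_neg_distrib]
    congr 1
    rw [← Finset.map_add_right_Icc _ _ 1, Finset.sum_map]
    apply Finset.sum_congr rfl
    intro n _
    simp [addRightEmbedding]
  have i1 : Finset.Icc (-(N:ℤ)+1) ((N:ℤ)+1) = insert ((N:ℤ)+1) (Finset.Icc (-(N:ℤ)+1) (N:ℤ)) := by
    ext m; simp only [Finset.mem_Icc, Finset.mem_insert]; omega
  have i2 : Finset.Icc (-(N:ℤ)) (N:ℤ) = insert (-(N:ℤ)) (Finset.Icc (-(N:ℤ)+1) (N:ℤ)) := by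
    ext m; simp only [Finset.mem_Icc, Finset.mem_insert]; omega
  have n1 : ((N:ℤ)+1) ∉ Finset.Icc (-(N:ℤ)+1) (N:ℤ) := by simp only [Finset.mem_Icc]; omega
  have n2 : (-(N:ℤ)) ∉ Finset.Icc (-(N:ℤ)+1) (N:ℤ) := by simp only [Finset.mem_Icc]; omega
  have h2 : S' α N = bterm' α (-(N:ℤ)) + ∑ m ∈ Finset.Icc (-(N:ℤ)+1) (N:ℤ), bterm' α m := by
    rw [S_eq', i2, Finset.sum_insert n2]
  rw [h1, i1, Finset.sum_insert n1, h2]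
  ring

private lemma bnd' (α : ℝ) (u : ℕ → ℤ) (h : Tendsto (fun N => |α + ((u N : ℤ) : ℝ)|) atTop atTop) :
    Tendsto (fun N : ℕ => bterm' α (u N)) atTop (nhds 0) := by
  refine squeeze_zero_norm (fun N => ?_) (by simpa using h.inv_tendsto_atTop)
  rw [bterm', norm_div, norm_zpow]
  simp

private lemma bnd1' (α : ℝ) : Tendsto (fun N : ℕ => bterm' α (-(N:ℤ))) atTop (nhds 0) := by
  apply bnd'
  have h : Tendsto (fun N : ℕ => α - (N:ℝ)) atTop atBot := by
    simpa [sub_eq_add_neg] using tendsto_atBot_add_const_left atTop α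
      (tendsto_neg_atBot_iff.mpr tendsto_natCast_atTop_atTop)
  have := tendsto_abs_atBot_atTop.comp h
  apply this.congr
  intro N
  simp only [Function.comp_apply]
  push_cast
  ring_nf

private lemma bnd2' (α : ℝ) : Tendsto (fun N : ℕ => bterm' α ((N:ℤ)+1)) atTop (nhds 0) := by
  apply bnd'
  have h : Tendsto (fun N : ℕ => α + ((N:ℝ) + 1)) atTop atTop :=
    tendsto_atTop_add_const_left _ _ (tendsto_atTop_add_const_right _ _ tendsto_natCast_atTop_atTop)
  have := tendsto_abs_atTop_atTop.comp h
  apply this.congr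
  intro N
  simp only [Function.comp_apply]
  push_cast
  ring_nf

private lemma shift_up' (α : ℝ) (L : ℝ) (h : Tendsto (S' α) atTop (nhds L)) :
    Tendsto (S' (α+1)) atTop (nhds (-L)) := by
  have he : S' (α+1) = fun N => -(S' α N) + bterm' α (-(N:ℤ)) - bterm' α ((N:ℤ)+1) :=
    funext (S_shift' α)
  rw [he]
  simpa using ((h.neg.add (bnd1' α)).sub (bnd2' α))

private lemma shift_down' (α : ℝ) (L : ℝ) (h : Tendsto (S' (α+1)) atTop (nhds L)) :
    Tendsto (S' α) atTop (nhds (-L)) := by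
  have he : S' α = fun N => -(S' (α+1) N) + bterm' α (-(N:ℤ)) - bterm' α ((N:ℤ)+1) := by
    funext N
    rw [S_shift' α N]
    ring
  rw [he]
  simpa using ((h.neg.add (bnd1' α)).sub (bnd2' α))

private lemma base_case' (β : ℝ) (h0 : 0 < β) (h1 : β < 1) :
    Tendsto (S' β) atTop (nhds (π / Real.sin (π * β))) := by
  have hA := (L1' β h0).comp (tendsto_add_atTop_nat 1)
  have hB := L1' (1-β) (by linarith)
  have hsum := hA.add hB
  rw [← L2' β h0 h1]
  exact hsum.congr (fun N => (S_split' β N).symm)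

private lemma induction_step' (β : ℝ) (h0 : 0 < β) (h1 : β < 1) (k : ℤ) :
    Tendsto (S' (β + k)) atTop (nhds ((-1:ℝ)^k * (π / Real.sin (π * β)))) := by
  induction k using Int.induction_on with
  | zero => simpa using base_case' β h0 h1
  | succ n ih =>
    have h := shift_up' (β + n) _ ih
    have e1 : β + ((n:ℤ)+1 : ℤ) = (β + n) + 1 := by push_cast; ring
    have e2 : ((-1:ℝ)^(((n:ℤ)+1) : ℤ)) * (π / Real.sin (π * β))
        = -((-1:ℝ)^(n:ℤ) * (π / Real.sin (π * β))) := by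
      rw [zpow_add₀ (by norm_num : (-1:ℝ) ≠ 0), zpow_one]
      ring
    rw [e1, e2]
    exact h
  | pred n ih =>
    have e1 : β + (-(n:ℤ) : ℤ) = (β + (-(n:ℤ)-1 : ℤ)) + 1 := by push_cast; ring
    rw [e1] at ih
    have h := shift_down' (β + (-(n:ℤ)-1 : ℤ)) _ ih
    have e2 : ((-1:ℝ)^((-(n:ℤ)-1) : ℤ)) * (π / Real.sin (π * β))
        = -((-1:ℝ)^(-(n:ℤ) : ℤ) * (π / Real.sin (π * β))) := by
      rw [show ((-(n:ℤ)) : ℤ) = (-(n:ℤ)-1) + 1 by ring, zpow_add₀ (by norm_num : (-1:ℝ) ≠ 0), zpow_one]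
      ring
    rw [e2]
    exact h

end SumAlternatingCscAux

theorem sum_alternating_csc (α : ℝ) (hα : ∀ m : ℤ, α ≠ m) :
    Tendsto (fun N : ℕ => ∑ n ∈ Finset.Icc (-(N : ℤ)) (N : ℤ), (-1 : ℝ) ^ n / (α + n))
      atTop (nhds (π / Real.sin (α * π))) := by
  set k : ℤ := ⌊α⌋ with hk
  set β : ℝ := Int.fract α with hβ
  have hβ0 : 0 < β := by
    rcases lt_or_eq_of_le (Int.fract_nonneg α) with h | h
    · exact h
    · exfalso
      have : α = (⌊α⌋ : ℝ) := by
        have := Int.fract_add_floor α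
        rw [← h] at this
        simpa using this.symm
      exact hα ⌊α⌋ this
  have hβ1 : β < 1 := Int.fract_lt_one α
  have hαeq : α = β + (k : ℝ) := by
    rw [hβ, hk]
    have := Int.fract_add_floor α
    linarith [this]
  have hmain := induction_step' β hβ0 hβ1 k
  have hS : Tendsto (S' α) atTop (nhds ((-1:ℝ)^k * (π / Real.sin (π * β)))) := by
    rwa [hαeq]
  have hsin_ne : Real.sin (π * β) ≠ 0 := by
    apply ne_of_gt
    apply Real.sin_pos_of_pos_of_lt_pi
    · positivity
    · nlinarith [Real.pi_pos]
  have hval : (-1:ℝ)^k * (π / Real.sin (π * β)) = π / Real.sin (α * π) := by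
    have hsin : Real.sin (α * π) = (-1:ℝ)^k * Real.sin (π * β) := by
      rw [show α * π = β * π + (k:ℝ) * π by rw [hαeq]; ring]
      rw [Real.sin_add_int_mul_pi, mul_comm β π]
    have hpm : ((-1:ℝ)^k) * ((-1:ℝ)^k) = 1 := by
      rw [← zpow_add₀ (by norm_num : (-1:ℝ) ≠ 0)]
      rw [show k + k = 2 * k by ring, zpow_mul]
      norm_num
    have hinv : ((-1:ℝ)^k) = ((-1:ℝ)^k)⁻¹ := eq_inv_of_mul_eq_one_left hpm
    rw [hsin, div_mul_eq_div_div_swap, div_eq_mul_inv (π / Real.sin (π * β)), ← hinv, mul_comm]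
  rw [← hval]
  exact hS
end

section
/- For every real number α that is not an integer, the series ∑_{n=-∞}^{∞} 1/(α+n) (summed symmetrically) converges to π·cot(απ). -/
open Real Filter

noncomputable def eulerP (N : ℕ) (z : ℂ) : ℂ :=
  ↑Real.pi * z * ∏ j ∈ Finset.range N, (1 - z ^ 2 / ((j : ℂ) + 1) ^ 2)

lemma eulerP_succ (N : ℕ) (z : ℂ) :
    eulerP (N + 1) z = eulerP N z * (1 - z ^ 2 / ((N : ℂ) + 1) ^ 2) := by
  unfold eulerP
  rw [Finset.prod_range_succ]
  ring

lemma eulerP_tendsto (z : ℂ) :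
    Tendsto (fun N => eulerP N z) atTop (nhds (Complex.sin (↑π * z))) :=
  Complex.tendsto_euler_sin_prod z

lemma summable_aux : Summable (fun n : ℕ => 1 / ((n : ℝ) + 1) ^ 2) := by
  have h1 : Summable (fun n : ℕ => 1 / (n : ℝ) ^ 2) := by
    exact Real.summable_one_div_nat_pow.mpr one_lt_two

  have h2 := (summable_nat_add_iff 1).mpr h1
  apply h2.congr
  intro n
  push_cast
  ring

lemma norm_cast_aux (j : ℕ) : ‖((j : ℂ) + 1)‖ = (j : ℝ) + 1 := by
  rw [show ((j : ℂ) + 1) = (((j + 1 : ℕ) : ℕ) : ℂ) by push_cast; ring, Complex.norm_natCast]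
  push_cast
  ring

lemma eulerP_norm_le (R : ℝ) (hR : 0 ≤ R) (z : ℂ) (hz : ‖z‖ ≤ R) (N : ℕ) :
    ‖eulerP N z‖ ≤ π * R * Real.exp (R ^ 2 * ∑' n : ℕ, 1 / ((n : ℝ) + 1) ^ 2) := by
  have hfac : ∀ j ∈ Finset.range N,
      ‖1 - z ^ 2 / ((j : ℂ) + 1) ^ 2‖ ≤ 1 + R ^ 2 / ((j : ℝ) + 1) ^ 2 := by
    intro j _
    calc ‖1 - z ^ 2 / ((j : ℂ) + 1) ^ 2‖
        ≤ ‖(1 : ℂ)‖ + ‖z ^ 2 / ((j : ℂ) + 1) ^ 2‖ := norm_sub_le _ _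
      _ = 1 + ‖z‖ ^ 2 / ((j : ℝ) + 1) ^ 2 := by
          rw [norm_one, norm_div, norm_pow, norm_pow, norm_cast_aux]
      _ ≤ 1 + R ^ 2 / ((j : ℝ) + 1) ^ 2 := by gcongr
  calc ‖eulerP N z‖
      = π * ‖z‖ * ∏ j ∈ Finset.range N, ‖1 - z ^ 2 / ((j : ℂ) + 1) ^ 2‖ := by
        unfold eulerP
        rw [norm_mul, norm_mul, norm_prod, Complex.norm_real, Real.norm_eq_abs,
          abs_of_nonneg Real.pi_pos.le]
    _ ≤ π * R * ∏ j ∈ Finset.range N, (1 + R ^ 2 / ((j : ℝ) + 1) ^ 2) := by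
        apply mul_le_mul
        · exact mul_le_mul_of_nonneg_left hz Real.pi_pos.le
        · exact Finset.prod_le_prod (fun i _ => norm_nonneg _) hfac
        · exact Finset.prod_nonneg fun i _ => norm_nonneg _
        · positivity
    _ ≤ π * R * ∏ j ∈ Finset.range N, Real.exp (R ^ 2 / ((j : ℝ) + 1) ^ 2) := by
        apply mul_le_mul_of_nonneg_left _ (by positivity)
        apply Finset.prod_le_prod (fun j _ => by positivity)
        intro j _
        rw [add_comm]
        exact Real.add_one_le_exp _
    _ = π * R * Real.exp (∑ j ∈ Finset.range N, R ^ 2 / ((j : ℝ) + 1) ^ 2) := by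
        rw [Real.exp_sum]
    _ ≤ π * R * Real.exp (R ^ 2 * ∑' n : ℕ, 1 / ((n : ℝ) + 1) ^ 2) := by
        apply mul_le_mul_of_nonneg_left _ (by positivity)
        apply Real.exp_le_exp.mpr
        have heq : ∑ j ∈ Finset.range N, R ^ 2 / ((j : ℝ) + 1) ^ 2
            = R ^ 2 * ∑ j ∈ Finset.range N, 1 / ((j : ℝ) + 1) ^ 2 := by
          rw [Finset.mul_sum]
          exact Finset.sum_congr rfl fun j _ => by ring
        rw [heq]
        apply mul_le_mul_of_nonneg_left _ (by positivity)
        exact summable_aux.sum_le_tsum _ (fun i _ => by positivity)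

lemma eulerP_tlu :
    TendstoLocallyUniformlyOn eulerP (fun z => Complex.sin (↑π * z)) atTop Set.univ := by
  rw [tendstoLocallyUniformlyOn_univ, tendstoLocallyUniformly_iff_forall_isCompact]
  intro K hK
  obtain ⟨R, hR0, hKR⟩ : ∃ R : ℝ, 0 ≤ R ∧ K ⊆ Metric.closedBall 0 R := by
    obtain ⟨R, hR⟩ := hK.isBounded.subset_closedBall 0
    exact ⟨max R 0, le_max_right _ _,
      hR.trans (Metric.closedBall_subset_closedBall (le_max_left _ _))⟩
  set T := ∑' n : ℕ, 1 / ((n : ℝ) + 1) ^ 2 with hT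
  set C := π * R * Real.exp (R ^ 2 * T) with hC
  have hCpos : 0 ≤ C := by positivity
  have hd_bound : ∀ (n : ℕ) (z : ℂ), z ∈ K →
      ‖eulerP (n + 1) z - eulerP n z‖ ≤ C * R ^ 2 * (1 / ((n : ℝ) + 1) ^ 2) := by
    intro n z hz
    have hzR : ‖z‖ ≤ R := by
      simpa using Metric.mem_closedBall.mp (hKR hz)
    have heq : eulerP (n + 1) z - eulerP n z = eulerP n z * (-(z ^ 2) / ((n : ℂ) + 1) ^ 2) := by
      rw [eulerP_succ]; ring
    rw [heq, norm_mul, norm_div, norm_neg, norm_pow, norm_pow, norm_cast_aux]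
    calc ‖eulerP n z‖ * (‖z‖ ^ 2 / ((n : ℝ) + 1) ^ 2)
        ≤ C * (R ^ 2 / ((n : ℝ) + 1) ^ 2) := by
          gcongr
          · exact eulerP_norm_le R hR0 z hzR n
      _ = C * R ^ 2 * (1 / ((n : ℝ) + 1) ^ 2) := by ring
  have hu : Summable (fun n : ℕ => C * R ^ 2 * (1 / ((n : ℝ) + 1) ^ 2)) :=
    summable_aux.mul_left _
  have hTU := tendstoUniformlyOn_tsum_nat hu
    (f := fun n z => eulerP (n + 1) z - eulerP n z) (fun n x hx => hd_bound n x hx)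
  have hconst : TendstoUniformlyOn (fun _ : ℕ => eulerP 0) (eulerP 0) atTop K := by
    intro u hu
    exact Eventually.of_forall (fun n x _ => refl_mem_uniformity hu)
  have h2 := hconst.add hTU
  apply (h2.congr ?_).congr_right ?_
  · filter_upwards with N x hx
    show eulerP 0 x + ∑ n ∈ Finset.range N, (eulerP (n + 1) x - eulerP n x) = eulerP N x
    rw [Finset.sum_range_sub (fun n => eulerP n x) N]
    ring
  · intro x hx
    have hs : Summable (fun n => eulerP (n + 1) x - eulerP n x) := by
      apply Summable.of_norm
      exact Summable.of_nonneg_of_le (fun n => norm_nonneg _) (fun n => hd_bound n x hx) hu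
    have h3 := hs.hasSum.tendsto_sum_nat
    have h4 : Tendsto (fun N => ∑ n ∈ Finset.range N, (eulerP (n + 1) x - eulerP n x))
        atTop (nhds (Complex.sin (↑π * x) - eulerP 0 x)) := by
      have h5 := (eulerP_tendsto x).sub_const (eulerP 0 x)
      exact h5.congr (fun N => (Finset.sum_range_sub (fun n => eulerP n x) N).symm)
    have h6 := tendsto_nhds_unique h3 h4
    show eulerP 0 x + ∑' n, (eulerP (n + 1) x - eulerP n x) = Complex.sin (↑π * x)
    rw [h6]
    ring

lemma one_sub_sq_div_ne (x c : ℂ) (hc : c ≠ 0) (h1 : x - c ≠ 0) (h2 : x + c ≠ 0) :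
    (1 : ℂ) - x ^ 2 / c ^ 2 ≠ 0 := by
  have heq : (1 : ℂ) - x ^ 2 / c ^ 2 = (-(x - c)) * (x + c) / c ^ 2 := by
    field_simp
    ring
  rw [heq]
  exact div_ne_zero (mul_ne_zero (neg_ne_zero.mpr h1) h2) (pow_ne_zero _ hc)

lemma logDeriv_factor (x c : ℂ) (hc : c ≠ 0) (h1 : x - c ≠ 0) (h2 : x + c ≠ 0) :
    logDeriv (fun z => 1 - z ^ 2 / c ^ 2) x = 1 / (x - c) + 1 / (x + c) := by
  have hd : HasDerivAt (fun z : ℂ => 1 - z ^ 2 / c ^ 2) (-(2 * x / c ^ 2)) x := by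
    have h := ((hasDerivAt_pow 2 x).div_const (c ^ 2)).const_sub 1
    simpa using h
  have hval := one_sub_sq_div_ne x c hc h1 h2
  rw [logDeriv_apply, hd.deriv, div_add_div _ _ h1 h2,
    div_eq_div_iff hval (mul_ne_zero h1 h2)]
  field_simp
  ring

lemma real_sum_eq (α : ℝ) (N : ℕ) :
    ∑ n ∈ Finset.Icc (-(N : ℤ)) (N : ℤ), 1 / (α + n) =
      1 / α + ∑ j ∈ Finset.range N, (1 / (α - (j + 1)) + 1 / (α + (j + 1))) := by
  induction N with
  | zero => simp
  | succ N ih =>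
    have hins : Finset.Icc (-((N : ℤ) + 1)) ((N : ℤ) + 1) =
        insert (-((N : ℤ) + 1)) (insert ((N : ℤ) + 1) (Finset.Icc (-(N : ℤ)) (N : ℤ))) := by
      ext m
      simp only [Finset.mem_Icc, Finset.mem_insert]
      omega
    have hc : ((N + 1 : ℕ) : ℤ) = (N : ℤ) + 1 := by push_cast; ring
    rw [hc, hins, Finset.sum_insert (by simp only [Finset.mem_insert, Finset.mem_Icc]; omega),
      Finset.sum_insert (by simp only [Finset.mem_Icc]; omega), Finset.sum_range_succ, ih]
    push_cast
    ring

lemma logDeriv_eulerP (α : ℝ) (hα : ∀ m : ℤ, α ≠ m) (N : ℕ) :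
    logDeriv (eulerP N) ↑α =
      ↑(1 / α + ∑ j ∈ Finset.range N, (1 / (α - (j + 1)) + 1 / (α + (j + 1)))) := by
  have h0r : α ≠ 0 := by simpa using hα 0
  have h0 : (α : ℂ) ≠ 0 := by exact_mod_cast h0r
  have hπ : ((π : ℝ) : ℂ) ≠ 0 := by exact_mod_cast Real.pi_ne_zero
  have hsubr : ∀ j : ℕ, α - ((j : ℝ) + 1) ≠ 0 := by
    intro j
    have := hα ((j : ℤ) + 1)
    rw [sub_ne_zero]
    push_cast at this ⊢
    exact this
  have haddr : ∀ j : ℕ, α + ((j : ℝ) + 1) ≠ 0 := by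
    intro j
    have := hα (-((j : ℤ) + 1))
    push_cast at this
    intro h
    exact this (by linarith)
  have hsub : ∀ j : ℕ, (α : ℂ) - ((j : ℂ) + 1) ≠ 0 := by
    intro j
    have h := hsubr j
    rw [show (α : ℂ) - ((j : ℂ) + 1) = ((α - ((j : ℝ) + 1) : ℝ) : ℂ) by push_cast; ring]
    exact_mod_cast h
  have hadd : ∀ j : ℕ, (α : ℂ) + ((j : ℂ) + 1) ≠ 0 := by
    intro j
    have h := haddr j
    rw [show (α : ℂ) + ((j : ℂ) + 1) = ((α + ((j : ℝ) + 1) : ℝ) : ℂ) by push_cast; ring]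
    exact_mod_cast h
  have hcne : ∀ j : ℕ, ((j : ℂ) + 1) ≠ 0 := by
    intro j
    have : ((j : ℝ) + 1) ≠ 0 := by positivity
    rw [show ((j : ℂ) + 1) = (((j : ℝ) + 1 : ℝ) : ℂ) by push_cast; ring]
    exact_mod_cast this
  have hfac : ∀ j ∈ Finset.range N, (fun z : ℂ => 1 - z ^ 2 / ((j : ℂ) + 1) ^ 2) ↑α ≠ 0 :=
    fun j _ => one_sub_sq_div_ne _ _ (hcne j) (hsub j) (hadd j)
  have hdfac : ∀ j ∈ Finset.range N,
      DifferentiableAt ℂ (fun z : ℂ => 1 - z ^ 2 / ((j : ℂ) + 1) ^ 2) ↑α :=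
    fun j _ => by fun_prop
  have hmul : logDeriv (eulerP N) ↑α =
      logDeriv (fun z : ℂ => ↑π * z) ↑α +
        logDeriv (fun z : ℂ => ∏ j ∈ Finset.range N, (1 - z ^ 2 / ((j : ℂ) + 1) ^ 2)) ↑α := by
    apply logDeriv_mul
    · exact mul_ne_zero hπ h0
    · rw [Finset.prod_ne_zero_iff]
      exact hfac
    · fun_prop
    · fun_prop
  rw [hmul, logDeriv_const_mul _ _ hπ, logDeriv_id',
    logDeriv_prod hfac hdfac]
  have hterm : ∀ j ∈ Finset.range N,
      logDeriv (fun z : ℂ => 1 - z ^ 2 / ((j : ℂ) + 1) ^ 2) ↑α =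
        1 / ((α : ℂ) - ((j : ℂ) + 1)) + 1 / ((α : ℂ) + ((j : ℂ) + 1)) :=
    fun j _ => logDeriv_factor _ _ (hcne j) (hsub j) (hadd j)
  rw [Finset.sum_congr rfl hterm]
  push_cast
  ring

lemma logDeriv_sin_pi (α : ℝ) :
    logDeriv (fun z : ℂ => Complex.sin (↑π * z)) ↑α = ↑(π * Real.cot (α * π)) := by
  have hd : HasDerivAt (fun z : ℂ => Complex.sin (↑π * z))
      (Complex.cos (↑π * ↑α) * ↑π) ↑α := by
    have h := (Complex.hasDerivAt_sin ((π : ℂ) * α)).comp (α : ℂ)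
      ((hasDerivAt_id (α : ℂ)).const_mul (π : ℂ))
    simpa [Function.comp_def] using h
  rw [logDeriv_apply, hd.deriv, Real.cot_eq_cos_div_sin]
  push_cast
  rw [mul_comm (α : ℂ) (π : ℂ)]
  ring

theorem sum_cot (α : ℝ) (hα : ∀ m : ℤ, α ≠ m) :
    Tendsto (fun N : ℕ => ∑ n ∈ Finset.Icc (-(N : ℤ)) (N : ℤ), 1 / (α + n))
      atTop (nhds (π * Real.cot (α * π))) := by
  have hπ : ((π : ℝ) : ℂ) ≠ 0 := by exact_mod_cast Real.pi_ne_zero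
  have hsin : Complex.sin (↑π * ↑α) ≠ 0 := by
    rw [Complex.sin_ne_zero_iff]
    intro k h
    apply hα k
    have h2 : (α : ℂ) = (k : ℂ) := by
      have h3 : ((π : ℝ) : ℂ) * α = ((π : ℝ) : ℂ) * k := by rw [h]; ring
      exact mul_left_cancel₀ hπ h3
    exact_mod_cast h2
  have hdiff : ∀ N : ℕ, DifferentiableOn ℂ (eulerP N) Set.univ := by
    intro N
    apply Differentiable.differentiableOn
    unfold eulerP
    apply Differentiable.mul
    · fun_prop
    · exact Differentiable.fun_finsetProd (fun j _ => by fun_prop)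
  have h := Complex.logDeriv_tendsto (f := eulerP) (hs := isOpen_univ)
    (x := (α : ℂ)) (hx := Set.mem_univ _) (hF := eulerP_tlu) (hf := Eventually.of_forall hdiff) (hg := hsin)
  have key : Tendsto (fun N : ℕ => logDeriv (eulerP N) ((α : ℂ))) atTop
      (nhds (logDeriv (fun z => Complex.sin (↑π * z)) ((α : ℂ)))) := h
  rw [logDeriv_sin_pi α] at key
  have key2 : Tendsto (fun N : ℕ =>
      ((∑ n ∈ Finset.Icc (-(N : ℤ)) (N : ℤ), 1 / (α + n) : ℝ) : ℂ)) atTop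
      (nhds ↑(π * Real.cot (α * π))) := by
    apply key.congr
    intro N
    rw [logDeriv_eulerP α hα N, real_sum_eq α N]
  have h3 := (Complex.continuous_re.tendsto _).comp key2
  simp only [Function.comp_def, Complex.ofReal_re] at h3
  exact h3
end

section
/- For every real x that is not an integer, π = sin(πx) · ∑_{n=-∞}^{∞} (-1)^n/(x+n), where the doubly infinite sum is taken as the limit of symmetric partial sums. -/
open Real Filter MeasureTheory Set intervalIntegral

variable {x : ℝ}


lemma betaReal (x : ℝ) (hx0 : 0 < x) (hx1 : x < 1) :
    ∫ s in (0:ℝ)..1, s ^ (x-1) * (1-s) ^ (-x) = π / Real.sin (π * x) := by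
  have hB : Complex.betaIntegral x (1-x) = ↑π / Complex.sin (↑π * x) := by
    have h1 := Complex.Gamma_mul_Gamma_eq_betaIntegral (s := (x:ℂ)) (t := 1 - x)
      (by simpa using hx0) (by simp [Complex.sub_re]; simpa using hx1)
    rw [Complex.Gamma_mul_Gamma_one_sub] at h1
    simpa [Complex.Gamma_one] using h1.symm
  have hco : (∫ s in (0:ℝ)..1, ((s ^ (x-1) * (1-s) ^ (-x) : ℝ) : ℂ))
      = Complex.betaIntegral x (1-x) := by
    rw [Complex.betaIntegral]
    refine intervalIntegral.integral_congr_ae ?_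
    have h1 : ∀ᵐ s : ℝ, s ≠ 1 := by
      refine ae_iff.mpr ?_
      simpa using (measure_singleton (1:ℝ) ▸ (by congr 1; ext s; simp : volume {s : ℝ | ¬ s ≠ 1} = volume {(1:ℝ)}))
    filter_upwards [h1] with s hs hmem
    have h0s : 0 < s := by
      rcases Set.mem_uIoc.mp hmem with h | h
      · exact h.1
      · linarith [h.1, h.2]
    have h1s : s < 1 := by
      rcases Set.mem_uIoc.mp hmem with h | h
      · exact lt_of_le_of_ne h.2 hs
      · linarith [h.1, h.2]
    rw [Complex.ofReal_mul, Complex.ofReal_cpow h0s.le, Complex.ofReal_cpow (by linarith : (0:ℝ) ≤ 1 - s)]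
    push_cast
    norm_num
  have hR : (↑(∫ s in (0:ℝ)..1, s ^ (x-1) * (1-s) ^ (-x)) : ℂ) = ↑π / Complex.sin (↑π * x) := by
    rw [← intervalIntegral.integral_ofReal, hco, hB]
  have hsin : Complex.sin (↑π * x) = ((Real.sin (π * x) : ℝ) : ℂ) := by
    rw [show ((π:ℝ) : ℂ) * (x:ℂ) = ((π*x : ℝ) : ℂ) by push_cast; ring, Complex.ofReal_sin]
  rw [hsin, ← Complex.ofReal_div] at hR
  exact_mod_cast hR


lemma sub1 (hx0 : 0 < x) (hx1 : x < 1) :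
    ∫ t in Ioo (0:ℝ) 1, t ^ (x-1) / (1+t)
      = ∫ s in Ioo (0:ℝ) (1/2), s ^ (x-1) * (1-s) ^ (-x) := by
  have himg : (fun s : ℝ => s / (1-s)) '' Ioo (0:ℝ) (1/2) = Ioo (0:ℝ) 1 := by
    ext t
    constructor
    · rintro ⟨s, ⟨hs0, hs1⟩, rfl⟩
      have h1 : 0 < 1 - s := by linarith
      constructor
      · positivity
      · rw [div_lt_one h1]; linarith
    · rintro ⟨ht0, ht1⟩
      refine ⟨t / (1+t), ⟨by positivity, ?_⟩, ?_⟩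
      · rw [div_lt_iff₀ (by linarith)]; linarith
      · have h1 : (0:ℝ) < 1 + t := by linarith
        field_simp; ring
  have hderiv : ∀ s ∈ Ioo (0:ℝ) (1/2),
      HasDerivWithinAt (fun s : ℝ => s / (1-s)) (((1-s)^2)⁻¹) (Ioo (0:ℝ) (1/2)) s := by
    intro s ⟨hs0, hs1⟩
    have h1 : (1:ℝ) - s ≠ 0 := by intro h; linarith [h]
    have := (hasDerivAt_id s).div ((hasDerivAt_id s).const_sub 1) h1
    refine this.hasDerivWithinAt.congr_deriv ?_
    simp only [id]
    field_simp
    ring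
  have hinj : InjOn (fun s : ℝ => s / (1-s)) (Ioo (0:ℝ) (1/2)) := by
    rintro a ⟨ha0, ha1⟩ b ⟨hb0, hb1⟩ h
    have h1 : (1:ℝ) - a ≠ 0 := by intro h; linarith [h]
    have h2 : (1:ℝ) - b ≠ 0 := by intro h; linarith [h]
    field_simp at h
    linarith
  rw [← himg, integral_image_eq_integral_abs_deriv_smul measurableSet_Ioo hderiv hinj]
  refine setIntegral_congr_fun measurableSet_Ioo ?_
  rintro s ⟨hs0, hs1⟩
  have h1 : (0:ℝ) < 1 - s := by linarith
  have e2 : 1 + s / (1-s) = (1-s)⁻¹ := by field_simp; ring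
  have e1 : (s / (1-s)) ^ (x-1) = s ^ (x-1) * (1-s) ^ (1-x) := by
    rw [Real.div_rpow hs0.le h1.le, div_eq_mul_inv, ← Real.rpow_neg h1.le, neg_sub]
  simp only [smul_eq_mul]
  rw [e2, e1]
  rw [abs_of_pos (by positivity), div_eq_mul_inv, inv_inv]
  have e4 : (1-s)⁻¹ * (1-s) ^ (1-x) = (1-s) ^ (-x) := by
    rw [← Real.rpow_neg_one (1-s), ← Real.rpow_add h1]
    ring_nf
  rw [show ((1-s)^2)⁻¹ * (s ^ (x-1) * (1-s) ^ (1-x) * (1-s))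
      = s ^ (x-1) * ((1-s)⁻¹ * (1-s) ^ (1-x)) from by field_simp, e4]

lemma sub2 (hx0 : 0 < x) (hx1 : x < 1) :
    ∫ t in Ioo (0:ℝ) 1, t ^ (-x) / (1+t)
      = ∫ s in Ioo (1/2:ℝ) 1, s ^ (x-1) * (1-s) ^ (-x) := by
  have himg : (fun s : ℝ => (1-s) / s) '' Ioo (1/2:ℝ) 1 = Ioo (0:ℝ) 1 := by
    ext t
    constructor
    · rintro ⟨s, ⟨hs0, hs1⟩, rfl⟩
      have h0 : (0:ℝ) < s := by linarith
      have h1 : (0:ℝ) < 1 - s := by linarith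
      constructor
      · positivity
      · rw [div_lt_one h0]; linarith
    · rintro ⟨ht0, ht1⟩
      have h1 : (0:ℝ) < 1 + t := by linarith
      refine ⟨1 / (1+t), ⟨?_, ?_⟩, ?_⟩
      · rw [div_lt_div_iff₀ (by norm_num) h1]; linarith
      · rw [div_lt_one h1]; linarith
      · field_simp; ring
  have hderiv : ∀ s ∈ Ioo (1/2:ℝ) 1,
      HasDerivWithinAt (fun s : ℝ => (1-s) / s) (-(s^2)⁻¹) (Ioo (1/2:ℝ) 1) s := by
    intro s ⟨hs0, hs1⟩
    have h0 : s ≠ 0 := by intro h; rw [h] at hs0; linarith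
    have := ((hasDerivAt_id s).const_sub 1).div (hasDerivAt_id s) h0
    refine this.hasDerivWithinAt.congr_deriv ?_
    simp only [id]
    field_simp
    ring
  have hinj : InjOn (fun s : ℝ => (1-s) / s) (Ioo (1/2:ℝ) 1) := by
    rintro a ⟨ha0, ha1⟩ b ⟨hb0, hb1⟩ h
    have h1 : a ≠ 0 := by intro h; rw [h] at ha0; linarith
    have h2 : b ≠ 0 := by intro h; rw [h] at hb0; linarith
    field_simp at h
    linarith
  rw [← himg, integral_image_eq_integral_abs_deriv_smul measurableSet_Ioo hderiv hinj]
  refine setIntegral_congr_fun measurableSet_Ioo ?_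
  rintro s ⟨hs0, hs1⟩
  have h0 : (0:ℝ) < s := by linarith
  have h1 : (0:ℝ) < 1 - s := by linarith
  have e2 : 1 + (1-s) / s = s⁻¹ := by field_simp; ring
  have e1 : ((1-s) / s) ^ (-x) = (1-s) ^ (-x) * s ^ x := by
    rw [Real.div_rpow h1.le h0.le, div_eq_mul_inv, ← Real.rpow_neg h0.le, neg_neg]
  simp only [smul_eq_mul]
  rw [e2, e1, abs_neg, abs_of_pos (by positivity), div_eq_mul_inv, inv_inv]
  have e4 : s⁻¹ * s ^ x = s ^ (x-1) := by
    rw [← Real.rpow_neg_one s, ← Real.rpow_add h0]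
    ring_nf
  rw [show (s^2)⁻¹ * ((1-s) ^ (-x) * s ^ x * s)
      = (s⁻¹ * s ^ x) * (1-s) ^ (-x) from by field_simp, e4]

lemma betaInteg1 (hx0 : 0 < x) (hx1 : x < 1) :
    IntervalIntegrable (fun s : ℝ => s ^ (x-1) * (1-s) ^ (-x)) volume 0 (1/2) := by
  apply IntervalIntegrable.mul_continuousOn
  · exact intervalIntegral.intervalIntegrable_rpow' (by linarith)
  · apply ContinuousOn.rpow_const
    · exact (continuous_const.sub continuous_id).continuousOn
    · intro s hs
      rw [Set.uIcc_of_le (by norm_num : (0:ℝ) ≤ 1/2)] at hs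
      left
      have := hs.2
      intro h; rw [sub_eq_zero] at h; rw [← h] at this; norm_num at this
lemma betaInteg2 (hx0 : 0 < x) (hx1 : x < 1) :
    IntervalIntegrable (fun s : ℝ => s ^ (x-1) * (1-s) ^ (-x)) volume (1/2) 1 := by
  have h1 : IntervalIntegrable (fun s : ℝ => (1-s) ^ (-x)) volume (1/2) 1 := by
    have := (intervalIntegral.intervalIntegrable_rpow' (a := 0) (b := 1/2)
      (r := -x) (by linarith)).comp_sub_left 1
    norm_num at this
    exact this.symm
  have := h1.mul_continuousOn (g := fun s : ℝ => s ^ (x-1)) ?_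
  · simpa [mul_comm] using this
  · apply ContinuousOn.rpow_const (continuous_id).continuousOn
    intro s hs
    rw [Set.uIcc_of_le (by norm_num : (1/2:ℝ) ≤ 1)] at hs
    left
    have := hs.1
    simp only [id_eq] at *
    intro h; rw [h] at this; norm_num at this

lemma Ival (hx0 : 0 < x) (hx1 : x < 1) :
    ∫ t in Ioo (0:ℝ) 1, (t ^ (x-1) + t ^ (-x)) / (1+t) = π / Real.sin (π * x) := by
  have hg1 : IntegrableOn (fun t : ℝ => t ^ (x-1) / (1+t)) (Ioo 0 1) volume := by
    have : IntervalIntegrable (fun t : ℝ => t ^ (x-1) * (1+t)⁻¹) volume 0 1 := by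
      apply IntervalIntegrable.mul_continuousOn
      · exact intervalIntegral.intervalIntegrable_rpow' (by linarith)
      · apply ContinuousOn.inv₀ (continuous_const.add continuous_id).continuousOn
        intro t ht
        rw [Set.uIcc_of_le (by norm_num : (0:ℝ) ≤ 1)] at ht
        have := ht.1; intro h; change (1:ℝ) + t = 0 at h; linarith
    rw [intervalIntegrable_iff_integrableOn_Ioo_of_le (by norm_num)] at this
    simpa [div_eq_mul_inv] using this
  have hg2 : IntegrableOn (fun t : ℝ => t ^ (-x) / (1+t)) (Ioo 0 1) volume := by
    have : IntervalIntegrable (fun t : ℝ => t ^ (-x) * (1+t)⁻¹) volume 0 1 := by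
      apply IntervalIntegrable.mul_continuousOn
      · exact intervalIntegral.intervalIntegrable_rpow' (by linarith)
      · apply ContinuousOn.inv₀ (continuous_const.add continuous_id).continuousOn
        intro t ht
        rw [Set.uIcc_of_le (by norm_num : (0:ℝ) ≤ 1)] at ht
        have := ht.1; intro h; change (1:ℝ) + t = 0 at h; linarith
    rw [intervalIntegrable_iff_integrableOn_Ioo_of_le (by norm_num)] at this
    simpa [div_eq_mul_inv] using this
  have hsplit : ∫ t in Ioo (0:ℝ) 1, (t ^ (x-1) + t ^ (-x)) / (1+t)
      = (∫ t in Ioo (0:ℝ) 1, t ^ (x-1) / (1+t)) + ∫ t in Ioo (0:ℝ) 1, t ^ (-x) / (1+t) := by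
    rw [← integral_add hg1 hg2]
    refine setIntegral_congr_fun measurableSet_Ioo fun t ht => ?_
    rw [add_div]
  rw [hsplit, sub1 hx0 hx1, sub2 hx0 hx1]
  have hb1 : IntegrableOn (fun s : ℝ => s ^ (x-1) * (1-s) ^ (-x)) (Ioo 0 (1/2)) volume := by
    have := betaInteg1 hx0 hx1
    rw [intervalIntegrable_iff_integrableOn_Ioo_of_le (by norm_num)] at this
    exact this
  have hb2 : IntegrableOn (fun s : ℝ => s ^ (x-1) * (1-s) ^ (-x)) (Ico (1/2) 1) volume := by
    have := betaInteg2 hx0 hx1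
    rw [intervalIntegrable_iff_integrableOn_Ico_of_le (by norm_num)] at this
    exact this
  rw [show (∫ s in Ioo (1/2:ℝ) 1, s ^ (x-1) * (1-s) ^ (-x))
      = ∫ s in Ico (1/2:ℝ) 1, s ^ (x-1) * (1-s) ^ (-x) from
    (MeasureTheory.integral_Ico_eq_integral_Ioo).symm]
  rw [← MeasureTheory.setIntegral_union (by
      simp [Set.disjoint_left]
      intro a h1 h2; intro h; linarith) measurableSet_Ico hb1 hb2]
  rw [show Ioo (0:ℝ) (1/2) ∪ Ico (1/2) 1 = Ioo 0 1 from by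
    ext t
    simp only [Set.mem_union, Set.mem_Ioo, Set.mem_Ico]
    constructor
    · rintro (⟨h1,h2⟩|⟨h1,h2⟩) <;> constructor <;> linarith
    · rintro ⟨h1,h2⟩
      rcases lt_or_ge t (1/2) with h|h
      · exact Or.inl ⟨h1, h⟩
      · exact Or.inr ⟨h, h2⟩]
  rw [← MeasureTheory.integral_Ioc_eq_integral_Ioo, ← intervalIntegral.integral_of_le (by norm_num : (0:ℝ) ≤ 1)]
  exact betaReal x hx0 hx1


lemma Icc_succ (N : ℕ) (f : ℤ → ℝ) :
    ∑ n ∈ Finset.Icc (-(N+1:ℕ):ℤ) (N+1:ℕ), f n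
      = (∑ n ∈ Finset.Icc (-(N:ℕ):ℤ) (N:ℕ), f n) + f (-(N+1:ℕ)) + f (N+1:ℕ) := by
  have h1 : Finset.Icc (-(N+1:ℕ):ℤ) (N+1:ℕ)
      = insert (-(N+1:ℕ):ℤ) (insert ((N+1:ℕ):ℤ) (Finset.Icc (-(N:ℕ):ℤ) (N:ℕ))) := by
    ext n
    simp only [Finset.mem_Icc, Finset.mem_insert]
    push_cast
    omega
  rw [h1, Finset.sum_insert (by simp only [Finset.mem_insert, Finset.mem_Icc]; push_cast; omega),
    Finset.sum_insert (by simp only [Finset.mem_Icc]; push_cast; omega)]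
  ring

lemma neg_one_zpow_natCast (N : ℕ) : ((-1:ℝ)) ^ ((N:ℤ)) = (-1:ℝ) ^ N := by
  exact_mod_cast zpow_natCast (-1:ℝ) N

lemma neg_one_zpow_neg_natCast (N : ℕ) : ((-1:ℝ)) ^ (-(N:ℤ)) = (-1:ℝ) ^ N := by
  rw [zpow_neg, neg_one_zpow_natCast]
  rcases Nat.even_or_odd N with h | h
  · rw [h.neg_one_pow]; norm_num
  · rw [h.neg_one_pow]; norm_num

lemma sum_reindex (x : ℝ) (N : ℕ) :
    ∑ n ∈ Finset.Icc (-(N:ℤ)) (N:ℤ), (-1:ℝ) ^ n / (x + n)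
      = 1/x + ∑ n ∈ Finset.range N, (-1:ℝ) ^ (n+1) * (1/(x+(n+1)) + 1/(x-(n+1))) := by
  induction N with
  | zero => simp
  | succ N ih =>
      rw [show (-((N+1:ℕ):ℤ)) = (-(N+1:ℕ):ℤ) from by push_cast; ring] -- noop?
      rw [Icc_succ N (fun n => (-1:ℝ) ^ n / (x + n)), ih, Finset.sum_range_succ]
      rw [neg_one_zpow_neg_natCast, neg_one_zpow_natCast]
      push_cast
      ring

lemma shift (x : ℝ) (N : ℕ) :
    ∑ n ∈ Finset.Icc (-(N:ℤ)) (N:ℤ), (-1:ℝ) ^ n / (x + 1 + n)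
      = -(∑ n ∈ Finset.Icc (-(N:ℤ)) (N:ℤ), (-1:ℝ) ^ n / (x + n))
        + (-1:ℝ) ^ N * (1/(x-N) + 1/(x+N+1)) := by
  induction N with
  | zero => simp
  | succ N ih =>
      rw [Icc_succ N (fun n => (-1:ℝ) ^ n / (x + 1 + n)),
        Icc_succ N (fun n => (-1:ℝ) ^ n / (x + n)), ih]
      simp only [neg_one_zpow_neg_natCast, neg_one_zpow_natCast]
      push_cast
      rw [pow_succ]
      ring


lemma rpow_ii (c : ℝ) (hc : -1 < c) :
    IntervalIntegrable (fun t : ℝ => t ^ c) volume 0 1 :=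
  intervalIntegral.intervalIntegrable_rpow' hc

lemma term_ii (hx0 : 0 < x) (hx1 : x < 1) (n : ℕ) :
    IntervalIntegrable (fun t : ℝ => (-1:ℝ) ^ (n+1) * (t ^ (x+n) - t ^ ((n:ℝ)-x)))
      volume 0 1 := by
  refine IntervalIntegrable.const_mul ?_ _
  exact (rpow_ii _ (by have : (0:ℝ) ≤ n := n.cast_nonneg; linarith)).sub
    (rpow_ii _ (by have : (0:ℝ) ≤ n := n.cast_nonneg; linarith))

lemma sum_ii (hx0 : 0 < x) (hx1 : x < 1) (N : ℕ) :
    IntervalIntegrable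
      (fun t : ℝ => ∑ n ∈ Finset.range N, (-1:ℝ) ^ (n+1) * (t ^ (x+n) - t ^ ((n:ℝ)-x)))
      volume 0 1 := by
  induction N with
  | zero => simp [_root_.intervalIntegrable_const]
  | succ N ih =>
      simp only [Finset.sum_range_succ]
      exact ih.add (term_ii hx0 hx1 N)

lemma FN_ii (hx0 : 0 < x) (hx1 : x < 1) (N : ℕ) :
    IntervalIntegrable
      (fun t : ℝ => t ^ (x-1) + ∑ n ∈ Finset.range N, (-1:ℝ) ^ (n+1) * (t ^ (x+n) - t ^ ((n:ℝ)-x)))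
      volume 0 1 :=
  (rpow_ii _ (by linarith)).add (sum_ii hx0 hx1 N)

lemma sum_eq_integral (hx0 : 0 < x) (hx1 : x < 1) (N : ℕ) :
    1/x + (∑ n ∈ Finset.range N, (-1:ℝ) ^ (n+1) * (1/(x+(n+1)) + 1/(x-(n+1))))
      = ∫ t in (0:ℝ)..1,
          (t ^ (x-1) + ∑ n ∈ Finset.range N, (-1:ℝ) ^ (n+1) * (t ^ (x+n) - t ^ ((n:ℝ)-x))) := by
  rw [intervalIntegral.integral_add (rpow_ii _ (by linarith)) (sum_ii hx0 hx1 N)]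
  have i0 : ∫ t in (0:ℝ)..1, t ^ (x-1) = 1/x := by
    rw [integral_rpow (Or.inl (by linarith))]
    rw [show x - 1 + 1 = x from by ring, Real.one_rpow, Real.zero_rpow hx0.ne']
    norm_num
  rw [i0, intervalIntegral.integral_finset_sum (fun n _ => term_ii hx0 hx1 n)]
  congr 1
  refine Finset.sum_congr rfl fun n _ => ?_
  rw [intervalIntegral.integral_const_mul,
    intervalIntegral.integral_sub
      (rpow_ii _ (by have : (0:ℝ) ≤ n := n.cast_nonneg; linarith))
      (rpow_ii _ (by have : (0:ℝ) ≤ n := n.cast_nonneg; linarith)),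
    integral_rpow (Or.inl (by have : (0:ℝ) ≤ n := n.cast_nonneg; linarith)),
    integral_rpow (Or.inl (by have : (0:ℝ) ≤ n := n.cast_nonneg; linarith))]
  have h1 : x + (n:ℝ) + 1 ≠ 0 := by have : (0:ℝ) ≤ n := n.cast_nonneg; positivity
  have h2 : (n:ℝ) - x + 1 ≠ 0 := by have : (0:ℝ) ≤ n := n.cast_nonneg; intro h; linarith [h]
  rw [Real.one_rpow, Real.one_rpow, Real.zero_rpow (by intro h; exact h1 (by linarith [h] : x + n + 1 = 0)),
    Real.zero_rpow (by intro h; exact h2 (by linarith [h] : (n:ℝ) - x + 1 = 0))]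
  have e : x - ((n:ℝ)+1) = -((n:ℝ) - x + 1) := by ring
  rw [e, div_neg]
  ring

lemma FN_closed (hx0 : 0 < x) (N : ℕ) {t : ℝ} (ht : t ∈ Ioo (0:ℝ) 1) :
    (t ^ (x-1) + ∑ n ∈ Finset.range N, (-1:ℝ) ^ (n+1) * (t ^ (x+n) - t ^ ((n:ℝ)-x)))
      - (t ^ (x-1) + t ^ (-x)) / (1+t)
      = (-1:ℝ) ^ (N+1) * t ^ N * (t ^ (-x) - t ^ x) / (1+t) := by
  obtain ⟨ht0, ht1⟩ := ht
  have hterm : ∀ n ∈ Finset.range N,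
      (-1:ℝ) ^ (n+1) * (t ^ (x+n) - t ^ ((n:ℝ)-x))
        = (t ^ (-x) - t ^ x) * (-t) ^ n := by
    intro n _
    have e1 : t ^ (x + (n:ℝ)) = t ^ x * t ^ n := by
      rw [Real.rpow_add ht0, Real.rpow_natCast]
    have e2 : t ^ ((n:ℝ) - x) = t ^ n * t ^ (-x) := by
      rw [show (n:ℝ) - x = (n:ℝ) + (-x) from by ring, Real.rpow_add ht0, Real.rpow_natCast]
    rw [e1, e2, neg_pow, pow_succ]
    ring
  rw [Finset.sum_congr rfl hterm, ← Finset.mul_sum,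
    geom_sum_eq (by intro h; linarith : (-t) ≠ 1) N]
  have hA : t ^ x = t ^ (x-1) * t := by
    rw [← Real.rpow_add_one ht0.ne' (x-1)]; norm_num
  rw [hA, neg_pow]
  have h1 : (1:ℝ) + t ≠ 0 := by positivity
  have h2 : (-t) - 1 ≠ 0 := by intro h; linarith
  field_simp
  ring

lemma FN_bound (hx0 : 0 < x) (N : ℕ) {t : ℝ} (ht : t ∈ Ioo (0:ℝ) 1) :
    |(-1:ℝ) ^ (N+1) * t ^ N * (t ^ (-x) - t ^ x) / (1+t)| ≤ t ^ ((N:ℝ) - x) := by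
  obtain ⟨ht0, ht1⟩ := ht
  have hBA : t ^ x ≤ t ^ (-x) :=
    Real.rpow_le_rpow_of_exponent_ge ht0 ht1.le (by linarith)
  have e : |(-1:ℝ) ^ (N+1) * t ^ N * (t ^ (-x) - t ^ x) / (1+t)|
      = t ^ N * (t ^ (-x) - t ^ x) / (1+t) := by
    rw [abs_div, abs_mul, abs_mul, abs_pow, abs_neg, abs_one, one_pow, one_mul,
      abs_of_nonneg (pow_nonneg ht0.le N), abs_of_nonneg (by linarith),
      abs_of_nonneg (by linarith : (0:ℝ) ≤ 1 + t)]
  rw [e]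
  have hnum : (0:ℝ) ≤ t ^ N * (t ^ (-x) - t ^ x) :=
    mul_nonneg (pow_nonneg ht0.le N) (by linarith)
  calc t ^ N * (t ^ (-x) - t ^ x) / (1+t) ≤ t ^ N * (t ^ (-x) - t ^ x) :=
        div_le_self hnum (by linarith)
    _ ≤ t ^ N * t ^ (-x) :=
        mul_le_mul_of_nonneg_left
          (sub_le_self _ (Real.rpow_nonneg ht0.le x)) (pow_nonneg ht0.le N)
    _ = t ^ ((N:ℝ) - x) := by
        rw [← Real.rpow_natCast t N, ← Real.rpow_add ht0]
        ring_nf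


lemma h_intOn (hx0 : 0 < x) (hx1 : x < 1) :
    IntegrableOn (fun t : ℝ => (t ^ (x-1) + t ^ (-x)) / (1+t)) (Ioo 0 1) volume := by
  have : IntervalIntegrable (fun t : ℝ => (t ^ (x-1) + t ^ (-x)) * (1+t)⁻¹) volume 0 1 := by
    apply IntervalIntegrable.mul_continuousOn
    · exact (rpow_ii _ (by linarith)).add (rpow_ii _ (by linarith))
    · apply ContinuousOn.inv₀ (continuous_const.add continuous_id).continuousOn
      intro t ht
      rw [Set.uIcc_of_le (by norm_num : (0:ℝ) ≤ 1)] at ht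
      have := ht.1; intro h; change (1:ℝ) + t = 0 at h; linarith
  rw [intervalIntegrable_iff_integrableOn_Ioo_of_le (by norm_num)] at this
  simpa [div_eq_mul_inv] using this

lemma E_tendsto (x : ℝ) :
    Tendsto (fun N : ℕ => (-1:ℝ) ^ N * (1/(x - N) + 1/(x + N + 1))) atTop (nhds 0) := by
  have h1 : Tendsto (fun N : ℕ => 1/(x - (N:ℝ))) atTop (nhds 0) := by
    have hb : Tendsto (fun N : ℕ => (N:ℝ) - x) atTop atTop :=
      tendsto_atTop_add_const_right atTop (-x) (tendsto_natCast_atTop_atTop (R := ℝ))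
        |>.congr fun N => by ring
    have := (Tendsto.comp tendsto_inv_atTop_zero hb).neg
    norm_num at this
    refine this.congr fun N => ?_
    rw [one_div, ← inv_neg]
    ring_nf
  have h2 : Tendsto (fun N : ℕ => 1/(x + (N:ℝ) + 1)) atTop (nhds 0) := by
    have hb : Tendsto (fun N : ℕ => x + (N:ℝ) + 1) atTop atTop := by
      have := tendsto_atTop_add_const_left atTop x (tendsto_natCast_atTop_atTop (R := ℝ))
      have := tendsto_atTop_add_const_right atTop 1 this
      exact this
    simp only [one_div]
    exact tendsto_inv_atTop_zero.comp hb
  have hsum := h1.abs.add h2.abs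
  norm_num at hsum
  apply squeeze_zero_norm _ hsum
  intro N
  rw [norm_mul, norm_pow, norm_neg, norm_one, one_pow, one_mul]
  calc ‖1/(x - N) + 1/(x + N + 1)‖ ≤ ‖1/(x - (N:ℝ))‖ + ‖1/(x + N + 1)‖ := norm_add_le _ _
    _ = |(x - (N:ℝ))⁻¹| + |(x + N + 1)⁻¹| := by rw [one_div, one_div]; rfl
    _ = |x - (N:ℝ)|⁻¹ + |x + N + 1|⁻¹ := by rw [abs_inv, abs_inv]

lemma keyIoo (hx0 : 0 < x) (hx1 : x < 1) :
    Tendsto (fun N : ℕ => ∑ n ∈ Finset.Icc (-(N:ℤ)) (N:ℤ), (-1:ℝ) ^ n / (x + n)) atTop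
      (nhds (π / Real.sin (π * x))) := by
  have hbound : ∀ N : ℕ,
      ‖(∑ n ∈ Finset.Icc (-(N:ℤ)) (N:ℤ), (-1:ℝ) ^ n / (x + n)) - π / Real.sin (π * x)‖
        ≤ 1/((N:ℝ) - x + 1) := by
    intro N
    have hS : (∑ n ∈ Finset.Icc (-(N:ℤ)) (N:ℤ), (-1:ℝ) ^ n / (x + n))
        = ∫ t in Ioo (0:ℝ) 1,
            (t ^ (x-1) + ∑ n ∈ Finset.range N, (-1:ℝ) ^ (n+1) * (t ^ (x+n) - t ^ ((n:ℝ)-x))) := by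
      rw [sum_reindex, sum_eq_integral hx0 hx1 N,
        intervalIntegral.integral_of_le (by norm_num : (0:ℝ) ≤ 1),
        MeasureTheory.integral_Ioc_eq_integral_Ioo]
    rw [hS, ← Ival hx0 hx1]
    have hFInt : IntegrableOn
        (fun t : ℝ => t ^ (x-1) + ∑ n ∈ Finset.range N, (-1:ℝ) ^ (n+1) * (t ^ (x+n) - t ^ ((n:ℝ)-x)))
        (Ioo 0 1) volume := by
      have := FN_ii hx0 hx1 N
      rwa [intervalIntegrable_iff_integrableOn_Ioo_of_le (by norm_num)] at this
    rw [← integral_sub hFInt (h_intOn hx0 hx1)]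
    have hgInt : IntegrableOn (fun t : ℝ => t ^ ((N:ℝ)-x)) (Ioo 0 1) volume := by
      have := rpow_ii ((N:ℝ)-x) (by have : (0:ℝ) ≤ N := N.cast_nonneg; linarith)
      rwa [intervalIntegrable_iff_integrableOn_Ioo_of_le (by norm_num)] at this
    have hb : ∀ᵐ t ∂(volume.restrict (Ioo (0:ℝ) 1)),
        ‖(t ^ (x-1) + ∑ n ∈ Finset.range N, (-1:ℝ) ^ (n+1) * (t ^ (x+n) - t ^ ((n:ℝ)-x)))
          - (t ^ (x-1) + t ^ (-x)) / (1+t)‖ ≤ t ^ ((N:ℝ)-x) := by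
      refine (ae_restrict_iff' measurableSet_Ioo).2 (ae_of_all _ fun t ht => ?_)
      rw [Real.norm_eq_abs, FN_closed hx0 N ht]
      exact FN_bound hx0 N ht
    refine le_trans (MeasureTheory.norm_integral_le_of_norm_le hgInt hb) (le_of_eq ?_)
    rw [← MeasureTheory.integral_Ioc_eq_integral_Ioo,
      ← intervalIntegral.integral_of_le (by norm_num : (0:ℝ) ≤ 1),
      integral_rpow (Or.inl (by have : (0:ℝ) ≤ N := N.cast_nonneg; linarith))]
    rw [Real.one_rpow, Real.zero_rpow (by have : (0:ℝ) ≤ N := N.cast_nonneg; intro h; linarith [h])]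
    norm_num
  have hb0 : Tendsto (fun N : ℕ => 1/((N:ℝ) - x + 1)) atTop (nhds 0) := by
    have hbt : Tendsto (fun N : ℕ => ((N:ℝ) - x + 1)) atTop atTop :=
      (tendsto_atTop_add_const_right atTop 1
        ((tendsto_atTop_add_const_right atTop (-x) (tendsto_natCast_atTop_atTop (R := ℝ))).congr
          fun N => by ring))
    simp only [one_div]
    exact Tendsto.comp tendsto_inv_atTop_zero hbt
  have := squeeze_zero_norm hbound hb0
  exact tendsto_sub_nhds_zero_iff.mp this

lemma base (hx0 : 0 < x) (hx1 : x < 1) :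
    Tendsto (fun N : ℕ =>
        Real.sin (π * x) * ∑ n ∈ Finset.Icc (-(N:ℤ)) (N:ℤ), (-1:ℝ) ^ n / (x + n))
      atTop (nhds π) := by
  have hπ := Real.pi_pos
  have hs : (0:ℝ) < Real.sin (π * x) :=
    Real.sin_pos_of_pos_of_lt_pi (by positivity) (by nlinarith)
  have := (keyIoo hx0 hx1).const_mul (Real.sin (π * x))
  rwa [show Real.sin (π * x) * (π / Real.sin (π * x)) = π from by field_simp] at this

lemma stepUp (x : ℝ)
    (h : Tendsto (fun N : ℕ =>
        Real.sin (π * x) * ∑ n ∈ Finset.Icc (-(N:ℤ)) (N:ℤ), (-1:ℝ) ^ n / (x + n))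
      atTop (nhds π)) :
    Tendsto (fun N : ℕ =>
        Real.sin (π * (x+1)) * ∑ n ∈ Finset.Icc (-(N:ℤ)) (N:ℤ), (-1:ℝ) ^ n / ((x+1) + n))
      atTop (nhds π) := by
  have hE := (E_tendsto x).const_mul (Real.sin (π * x))
  have h2 := h.sub hE
  norm_num at h2
  refine h2.congr fun N => ?_
  rw [show π * (x+1) = π * x + π from by ring, Real.sin_add_pi, shift x N]
  ring

lemma stepDown (x : ℝ)
    (h : Tendsto (fun N : ℕ =>
        Real.sin (π * x) * ∑ n ∈ Finset.Icc (-(N:ℤ)) (N:ℤ), (-1:ℝ) ^ n / (x + n))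
      atTop (nhds π)) :
    Tendsto (fun N : ℕ =>
        Real.sin (π * (x-1)) * ∑ n ∈ Finset.Icc (-(N:ℤ)) (N:ℤ), (-1:ℝ) ^ n / ((x-1) + n))
      atTop (nhds π) := by
  have hE := (E_tendsto (x-1)).const_mul (Real.sin (π * x))
  have h2 := h.sub hE
  norm_num at h2
  refine h2.congr fun N => ?_
  rw [show π * (x-1) = π * x - π from by ring, Real.sin_sub_pi]
  have hs := shift (x-1) N
  rw [show x - 1 + 1 = x from by ring] at hs
  rw [hs]
  ring

lemma main_gen (y : ℝ) (hy0 : 0 < y) (hy1 : y < 1) : ∀ m : ℤ,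
    Tendsto (fun N : ℕ =>
        Real.sin (π * (y + m)) * ∑ n ∈ Finset.Icc (-(N:ℤ)) (N:ℤ), (-1:ℝ) ^ n / ((y + m) + n))
      atTop (nhds π) := by
  intro m
  induction m using Int.induction_on with
  | zero => simpa using base hy0 hy1
  | succ k ih =>
      have h2 := stepUp _ ih
      refine h2.congr fun N => ?_
      norm_num [add_assoc]
  | pred k ih =>
      have h2 := stepDown _ ih
      refine h2.congr fun N => ?_
      push_cast
      ring_nf

theorem pi_eq_sin_mul_sum (x : ℝ) (hx : ∀ m : ℤ, x ≠ m) :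
    Tendsto (fun N : ℕ =>
        Real.sin (π * x) * ∑ n ∈ Finset.Icc (-(N : ℤ)) (N : ℤ), (-1 : ℝ) ^ n / (x + n))
      atTop (nhds π) := by
  have h0 : Int.fract x ≠ 0 := by
    intro h
    refine hx ⌊x⌋ ?_
    have := Int.fract_add_floor x
    rw [h] at this
    linarith
  have hy0 : 0 < Int.fract x := lt_of_le_of_ne (Int.fract_nonneg x) (Ne.symm h0)
  have := main_gen (Int.fract x) hy0 (Int.fract_lt_one x) ⌊x⌋
  rwa [Int.fract_add_floor x] at this
end

section
/- For every real x that is not an integer, π³ = (2 sin³(πx)/(2 − sin²(πx))) · ∑_{n=-∞}^{∞} (-1)^n/(x+n)³, where the doubly infinite sum is taken as the limit of symmetric partial sums. -/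
open Filter Complex

namespace PiCubeAux

noncomputable def EE (x : ℝ) : ℂ := Complex.exp (2 * Real.pi * x * I)
noncomputable def bb (x : ℝ) : ℂ := 4 * EE x / (1 - EE x)
noncomputable def cc (x : ℝ) : ℂ := 4 * EE x * (1 + EE x) / (1 - EE x) ^ 2
noncomputable def gg (x : ℝ) : ℝ → ℂ := fun t =>
  ((t : ℂ) ^ 2 + bb x * t + cc x) * Complex.exp (Real.pi * x * t * I)

variable {x : ℝ}

lemma EE_ne_one (hx : ∀ m : ℤ, x ≠ m) : EE x ≠ 1 := by
  rw [Ne, EE, Complex.exp_eq_one_iff]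
  push_neg
  intro n h
  have hπ : (2 * (Real.pi : ℂ) * I : ℂ) ≠ 0 := by
    simp [Real.pi_ne_zero, Complex.I_ne_zero]
  have h2 : ((x : ℂ)) * (2 * (Real.pi : ℂ) * I) = (n : ℂ) * (2 * (Real.pi : ℂ) * I) := by
    rw [← h]; ring
  have h3 : (x : ℂ) = (n : ℂ) := mul_right_cancel₀ hπ h2
  exact hx n (by exact_mod_cast h3)

lemma one_sub_EE_ne_zero (hx : ∀ m : ℤ, x ≠ m) : 1 - EE x ≠ 0 :=
  sub_ne_zero.mpr (EE_ne_one hx).symm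

lemma gg_cont : Continuous (gg x) := by
  unfold gg
  fun_prop

lemma gg_endpoints (hx : ∀ m : ℤ, x ≠ m) : gg x 0 = gg x 2 := by
  have h1 : (1 : ℂ) - EE x ≠ 0 := one_sub_EE_ne_zero hx
  have h2 : Complex.exp ((Real.pi : ℂ) * (x : ℂ) * (2 : ℂ) * I) = EE x := by
    rw [EE]; congr 1; ring
  simp only [gg, Complex.ofReal_zero, Complex.ofReal_ofNat, mul_zero, zero_mul, Complex.exp_zero,
    mul_one, add_zero]
  rw [h2, bb, cc]
  field_simp
  ring

lemma gg_coeff (hx : ∀ m : ℤ, x ≠ m) (h1 : 1 - EE x ≠ 0) (n : ℤ) :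
    fourierCoeffOn (by norm_num : (0:ℝ) < 2) (gg x) n =
      I * (EE x - 1) / ((Real.pi : ℂ) * ((x : ℂ) - (n : ℂ))) ^ 3 := by
  set a : ℂ := (Real.pi : ℂ) * ((x : ℂ) - (n : ℂ)) with ha_def
  have hxn : (x : ℂ) - (n : ℂ) ≠ 0 := by
    rw [sub_ne_zero]
    exact_mod_cast hx n
  have ha : a ≠ 0 := mul_ne_zero (by exact_mod_cast Real.pi_ne_zero) hxn
  have haI : a * I ≠ 0 := mul_ne_zero ha Complex.I_ne_zero
  set A : ℂ := (a * I)⁻¹ with hA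
  set B : ℂ := (bb x - 2 * A) * (a * I)⁻¹ with hB
  set C : ℂ := (cc x - B) * (a * I)⁻¹ with hC
  set G : ℝ → ℂ := fun t => (A * (t : ℂ) ^ 2 + B * t + C) * Complex.exp (a * t * I) with hG
  -- the integrand equals a clean function of `t`
  have heq : ∀ t : ℝ, (fourier (-n) ((t : ℝ) : AddCircle ((2:ℝ) - 0))) • gg x t
      = ((t : ℂ) ^ 2 + bb x * t + cc x) * Complex.exp (a * t * I) := by
    intro t
    rw [fourier_coe_apply, smul_eq_mul]
    simp only [gg]
    rw [show a * (t : ℂ) * I =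
        2 * (Real.pi : ℂ) * I * ((-n : ℤ) : ℂ) * (t : ℂ) / (((2:ℝ) - 0 : ℝ) : ℂ)
          + (Real.pi : ℂ) * (x : ℂ) * (t : ℂ) * I by
      rw [ha_def]; push_cast; field_simp; ring]
    rw [Complex.exp_add]
    ring
  have hder : ∀ t ∈ Set.uIcc (0:ℝ) 2,
      HasDerivAt G ((fourier (-n) ((t : ℝ) : AddCircle ((2:ℝ) - 0))) • gg x t) t := by
    intro t _
    have h1' : HasDerivAt (fun s : ℝ => ((s : ℂ))) 1 t := by
      exact (hasDerivAt_id t).ofReal_comp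
    have hsq : HasDerivAt (fun s : ℝ => ((s : ℂ)) ^ 2) (2 * (t : ℂ)) t := by
      simpa using (hasDerivAt_pow 2 (t:ℂ)).comp_ofReal
    have hpoly : HasDerivAt (fun s : ℝ => A * ((s : ℂ)) ^ 2 + B * ((s : ℂ)) + C)
        (A * (2 * (t : ℂ)) + B * 1) t := ((hsq.const_mul A).add (h1'.const_mul B)).add_const C
    have harg : HasDerivAt (fun s : ℝ => (a * (s : ℂ) * I)) (a * I) t := by
      simpa using (h1'.const_mul a).mul_const I
    have hexp : HasDerivAt (fun s : ℝ => Complex.exp (a * (s : ℂ) * I))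
        (Complex.exp (a * (t : ℂ) * I) * (a * I)) t := harg.cexp
    have hmul := hpoly.mul hexp
    rw [heq t]
    convert hmul using 1
    · rfl
    · rfl
    have key : ∀ Ex : ℂ, ((t : ℂ) ^ 2 + bb x * t + cc x) * Ex
        = (A * (2 * (t : ℂ)) + B * 1) * Ex + (A * (t : ℂ) ^ 2 + B * t + C) * (Ex * (a * I)) := by
      intro Ex
      have gen : ∀ w v q r Ex : ℂ, v * w = 1 →
          ((t : ℂ) ^ 2 + q * t + r) * Ex
            = (v * (2 * (t : ℂ)) + (q - 2 * v) * v * 1) * Ex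
              + (v * (t : ℂ) ^ 2 + (q - 2 * v) * v * t + (r - (q - 2 * v) * v) * v)
                * (Ex * w) := by
        intro w v q r Ex hv
        linear_combination (-Ex * ((t : ℂ) ^ 2 + (q - 2 * v) * t + (r - (q - 2 * v) * v))) * hv
      exact gen (a * I) ((a * I)⁻¹) (bb x) (cc x) Ex (inv_mul_cancel₀ haI)
    exact key _
  have hcont : Continuous fun t : ℝ => (fourier (-n) ((t : ℝ) : AddCircle ((2:ℝ) - 0))) • gg x t := by
    have : Continuous (gg x) := by unfold gg; fun_prop
    exact ((map_continuous (fourier (-n))).comp (AddCircle.continuous_mk' _)).smul this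
  have hint : (∫ t in (0:ℝ)..2, (fourier (-n) ((t : ℝ) : AddCircle ((2:ℝ) - 0))) • gg x t)
      = G 2 - G 0 :=
    intervalIntegral.integral_eq_sub_of_hasDerivAt hder (hcont.intervalIntegrable _ _)
  rw [fourierCoeffOn_eq_integral, hint]
  have hE2 : Complex.exp (a * (2 : ℂ) * I) = EE x := by
    rw [show a * (2 : ℂ) * I
        = 2 * (Real.pi : ℂ) * (x:ℂ) * I + (-n : ℤ) * (2 * (Real.pi:ℂ) * I) by
      rw [ha_def]; push_cast; ring]
    rw [Complex.exp_add, Complex.exp_int_mul_two_pi_mul_I, mul_one, EE]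
  simp only [hG]
  push_cast
  rw [hE2]
  have hsmul : ∀ z : ℂ, ((1 : ℝ)/(2 - 0)) • z = z / 2 := by
    intro z
    rw [Complex.real_smul]
    push_cast
    ring
  rw [hsmul]
  simp only [Complex.ofReal_zero, mul_zero, zero_mul, Complex.exp_zero, mul_one, add_zero,
    ne_eq, OfNat.ofNat_ne_zero, not_false_eq_true, zero_pow]
  rw [hC, hB, hA, bb, cc]
  have hI : Complex.I ≠ 0 := Complex.I_ne_zero
  have hvI : I * (EE x - 1) / a ^ 3 = (EE x - 1) * ((a * I)⁻¹) ^ 3 := by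
    have : a * I ≠ 0 := haI
    field_simp
    ring_nf
    simp [Complex.I_sq]
  rw [hvI]
  have hgen : ∀ v E : ℂ, 1 - E ≠ 0 →
      ((v * 2 ^ 2 + (4 * E / (1 - E) - 2 * v) * v * 2
        + (4 * E * (1 + E) / (1 - E) ^ 2 - (4 * E / (1 - E) - 2 * v) * v) * v) * E
        - (0 + (4 * E * (1 + E) / (1 - E) ^ 2 - (4 * E / (1 - E) - 2 * v) * v) * v)) / 2
        = (E - 1) * v ^ 3 := by
    intro v E hE0
    obtain ⟨d, hd, rfl⟩ : ∃ d, d ≠ 0 ∧ E = 1 - d := ⟨1 - E, by simpa using hE0, by ring⟩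
    have h1 : (1 : ℂ) - (1 - d) = d := by ring
    rw [h1]
    field_simp
    ring
  exact hgen ((a * I)⁻¹) (EE x) h1

lemma summable_cubes (y : ℝ) : Summable (fun n : ℤ => 1 / |(n:ℝ) + y| ^ (3:ℕ)) := by
  have := (Real.summable_one_div_int_add_rpow y 3).mpr (by norm_num)
  have h3 : ((3:ℝ)) = ((3:ℕ):ℝ) := by norm_num
  rw [h3] at this
  simpa only [Real.rpow_natCast] using this

lemma pc_hasSum (hx : ∀ m : ℤ, x ≠ m) :
    HasSum (fun n : ℤ => (-1:ℝ) ^ n / (x + n) ^ 3)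
      (Real.pi ^ 3 * (2 - Real.sin (Real.pi * x) ^ 2) / (2 * Real.sin (Real.pi * x) ^ 3)) := by
  haveI : Fact ((0:ℝ) < 2) := ⟨by norm_num⟩
  have h1 : (1 : ℂ) - EE x ≠ 0 := one_sub_EE_ne_zero hx
  have hIE : I * (EE x - 1) ≠ 0 :=
    mul_ne_zero Complex.I_ne_zero (fun h => h1 (by rw [← neg_sub] at h; simpa using neg_eq_zero.mp h))
  have hπ : ((Real.pi : ℂ)) ≠ 0 := by exact_mod_cast Real.pi_ne_zero
  -- the function on the circle
  set f : C(AddCircle (2:ℝ), ℂ) :=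
    ⟨AddCircle.liftIco 2 0 (gg x),
      AddCircle.liftIco_zero_continuous (gg_endpoints hx) gg_cont.continuousOn⟩ with hf
  have hcoeff : ∀ n : ℤ, fourierCoeff (⇑f) n
      = I * (EE x - 1) / ((Real.pi : ℂ) * ((x : ℂ) - (n : ℂ))) ^ 3 := by
    intro n
    rw [hf]
    rw [ContinuousMap.coe_mk, fourierCoeff_liftIco_eq]
    simpa only [zero_add] using gg_coeff hx h1 n
  -- summability of the coefficients
  have hsumm : Summable (fourierCoeff (⇑f)) := by
    apply Summable.of_norm
    apply Summable.congr (((summable_cubes (-x)).mul_left (‖I * (EE x - 1)‖ / Real.pi ^ 3)))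
    intro n
    rw [hcoeff n, norm_div, norm_mul, norm_pow, norm_mul,
      show ((x:ℂ) - (n:ℂ)) = (((x - (n:ℝ) : ℝ)):ℂ) by push_cast; ring]
    simp only [Complex.norm_real, Real.norm_eq_abs, abs_of_pos Real.pi_pos]
    rw [show |x - (n:ℝ)| = |(n:ℝ) + -x| by rw [abs_sub_comm, sub_eq_add_neg], mul_pow]
    ring
  -- pointwise convergence at the point 1
  have hpt := has_pointwise_sum_fourier_series_of_summable hsumm ((1:ℝ) : AddCircle (2:ℝ))
  have hf1 : f ((1:ℝ) : AddCircle (2:ℝ)) = gg x 1 := by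
    rw [hf, ContinuousMap.coe_mk]
    exact AddCircle.liftIco_coe_apply (by norm_num)
  have hfour : ∀ n : ℤ, fourier n ((1:ℝ) : AddCircle (2:ℝ)) = (-1 : ℂ) ^ n := by
    intro n
    rw [fourier_coe_apply]
    rw [show 2 * (Real.pi:ℂ) * I * (n:ℂ) * ((1:ℝ):ℂ) / ((2:ℝ):ℂ) = (n:ℂ) * ((Real.pi:ℂ) * I) by
      push_cast; ring]
    rw [Complex.exp_int_mul, Complex.exp_pi_mul_I]
  -- reindex by n ↦ -n and multiply by the constant K
  set K : ℂ := (Real.pi:ℂ) ^ 3 / (I * (EE x - 1)) with hK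
  have hneg := (Equiv.hasSum_iff (Equiv.neg ℤ)).mpr hpt
  have hmul := hneg.mul_left K
  set s : ℝ := Real.sin (Real.pi * x) with hs_def
  have hs : s ≠ 0 := by
    rw [hs_def]
    intro h
    rcases Real.sin_eq_zero_iff.mp h with ⟨n, hn⟩
    apply hx n
    apply mul_left_cancel₀ Real.pi_ne_zero
    rw [← hn]; ring
  -- identify the terms
  have hterm : ∀ n : ℤ, K * ((fun i => fourierCoeff (⇑f) i • fourier i ((1:ℝ) : AddCircle (2:ℝ)))
      ((Equiv.neg ℤ) n)) = (((-1:ℝ) ^ n / (x + n) ^ 3 : ℝ) : ℂ) := by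
    intro n
    have hxn : ((x:ℂ) + (n:ℂ)) ≠ 0 := by
      rw [show ((x:ℂ) + (n:ℂ)) = (((x + (n:ℝ) : ℝ)):ℂ) by push_cast; ring]
      rw [Ne, Complex.ofReal_eq_zero]
      intro h
      exact hx (-n) (by push_cast; linarith)
    simp only [Equiv.neg_apply]
    rw [hcoeff (-n), hfour (-n), smul_eq_mul]
    rw [show ((-1:ℂ)) ^ (-n) = (-1:ℂ) ^ n by rw [zpow_neg, ← inv_zpow, inv_neg, inv_one]]
    rw [show ((x:ℂ) - ((-n : ℤ):ℂ)) = ((x:ℂ) + (n:ℂ)) by push_cast; ring]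
    rw [hK]
    push_cast
    have hE1 : EE x - 1 ≠ 0 := fun h => h1 (by linear_combination -h)
    field_simp
  -- identify the sum
  have hsum_val : K * f ((1:ℝ) : AddCircle (2:ℝ))
      = ((Real.pi ^ 3 * (2 - s ^ 2) / (2 * s ^ 3) : ℝ) : ℂ) := by
    rw [hf1]
    set u : ℂ := Complex.exp ((Real.pi:ℂ) * x * I) with hu_def
    have hu : u ≠ 0 := Complex.exp_ne_zero _
    have hE : EE x = u ^ 2 := by
      rw [EE, hu_def, show 2 * (Real.pi:ℂ) * x * I = (Real.pi:ℂ) * x * I + (Real.pi:ℂ) * x * I by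
        ring, Complex.exp_add, pow_two]
    have h1u : 1 - u ^ 2 ≠ 0 := by rw [← hE]; exact h1
    have hsin : ((s : ℝ) : ℂ) = (1 - u ^ 2) * I / (2 * u) := by
      rw [hs_def, Complex.ofReal_sin, show ((Real.pi * x : ℝ) : ℂ) = (Real.pi:ℂ) * x by push_cast; ring]
      show (Complex.exp (-((Real.pi:ℂ) * x) * I) - Complex.exp ((Real.pi:ℂ) * x * I)) * I / 2 = _
      rw [show -((Real.pi:ℂ) * x) * I = -((Real.pi:ℂ) * x * I) by ring, Complex.exp_neg, ← hu_def]
      rw [inv_eq_one_div]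
      field_simp
    have hgg1 : gg x 1 = (1 + bb x + cc x) * u := by
      simp only [gg, Complex.ofReal_one, one_pow, mul_one, hu_def]
    have hbc : 1 + bb x + cc x = (1 + 6 * EE x + EE x ^ 2) / (1 - EE x) ^ 2 := by
      rw [bb, cc]
      field_simp
      ring
    have hσ2 : ((s:ℝ):ℂ) ^ 2 = -(1 - u ^ 2) ^ 2 / (2 * u) ^ 2 := by
      rw [hsin, div_pow, mul_pow, Complex.I_sq]
      ring
    have hσ3 : ((s:ℝ):ℂ) ^ 3 = -(1 - u ^ 2) ^ 3 * I / (2 * u) ^ 3 := by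
      rw [hsin, div_pow, mul_pow, show I ^ 3 = -I by
        rw [pow_succ, Complex.I_sq]; ring]
      ring
    have hsC : ((s:ℝ):ℂ) ≠ 0 := by exact_mod_cast hs
    have h2σ3 : (2:ℂ) * ((s:ℝ):ℂ) ^ 3 ≠ 0 := mul_ne_zero two_ne_zero (pow_ne_zero _ hsC)
    rw [show ((Real.pi ^ 3 * (2 - s ^ 2) / (2 * s ^ 3) : ℝ) : ℂ)
        = (Real.pi:ℂ) ^ 3 * (2 - ((s:ℝ):ℂ) ^ 2) / (2 * ((s:ℝ):ℂ) ^ 3) by push_cast; ring]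
    rw [eq_div_iff h2σ3]
    rw [hgg1, hK, hbc, hE, hσ2, hσ3]
    have hIE' : I * (u ^ 2 - 1) ≠ 0 := by rw [← hE]; exact hIE
    have hu1 : u ^ 2 - 1 ≠ 0 := fun h => h1u (by linear_combination -h)
    field_simp
    ring
  -- assemble
  have hC : HasSum (fun n : ℤ => (((-1:ℝ) ^ n / (x + n) ^ 3 : ℝ) : ℂ))
      (((Real.pi ^ 3 * (2 - s ^ 2) / (2 * s ^ 3) : ℝ) : ℂ)) := by
    rw [show (fun n : ℤ => (((-1:ℝ) ^ n / (x + n) ^ 3 : ℝ) : ℂ))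
        = fun n : ℤ => K * ((fun i => fourierCoeff (⇑f) i • fourier i ((1:ℝ) : AddCircle (2:ℝ)))
          ((Equiv.neg ℤ) n)) from funext fun n => (hterm n).symm]
    rw [← hsum_val]
    exact hmul
  exact Complex.hasSum_ofReal.mp hC

end PiCubeAux

open Real

theorem pi_cube_eq (x : ℝ) (hx : ∀ m : ℤ, x ≠ m) :
    Tendsto (fun N : ℕ =>
        2 * Real.sin (π * x) ^ 3 / (2 - Real.sin (π * x) ^ 2) *
          ∑ n ∈ Finset.Icc (-(N : ℤ)) (N : ℤ), (-1 : ℝ) ^ n / (x + n) ^ 3)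
      atTop (nhds (π ^ 3)) := by
  have hkey := PiCubeAux.pc_hasSum hx
  have hIcc : Tendsto (fun N : ℕ => Finset.Icc (-(N:ℤ)) (N:ℤ)) atTop atTop := by
    apply tendsto_atTop_finset_of_monotone
    · intro a b hab
      exact Finset.Icc_subset_Icc (by omega) (by omega)
    · intro n
      exact ⟨n.natAbs, by simp only [Finset.mem_Icc]; omega⟩
  have htend := hkey.comp hIcc
  have hs : Real.sin (π * x) ≠ 0 := by
    intro h
    rcases Real.sin_eq_zero_iff.mp h with ⟨n, hn⟩
    apply hx n
    apply mul_left_cancel₀ Real.pi_ne_zero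
    rw [← hn]; ring
  have h2s : (2 : ℝ) - Real.sin (π * x) ^ 2 ≠ 0 := by
    have := Real.sin_sq_le_one (π * x)
    intro h
    nlinarith
  have hPV : 2 * Real.sin (π * x) ^ 3 / (2 - Real.sin (π * x) ^ 2) *
      (π ^ 3 * (2 - Real.sin (π * x) ^ 2) / (2 * Real.sin (π * x) ^ 3)) = π ^ 3 := by
    field_simp
  rw [show nhds (π ^ 3) = nhds (2 * Real.sin (π * x) ^ 3 / (2 - Real.sin (π * x) ^ 2) *
      (π ^ 3 * (2 - Real.sin (π * x) ^ 2) / (2 * Real.sin (π * x) ^ 3))) by rw [hPV]]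
  exact htend.const_mul _
end

section
/- For all real x and a, neither of which is an integer, π·cot(πx) − π·cot(πa) = ∑_{n=-∞}^{∞} (a − x)/((x − n)(a − n)), where the doubly infinite sum converges absolutely. -/
open Real Filter Finset Topology

set_option maxHeartbeats 1000000

lemma norm_prod_one_add_le {ι : Type*} (s : Finset ι) (f : ι → ℂ) :
    ‖∏ i ∈ s, (1 + f i)‖ ≤ ∏ i ∈ s, (1 + ‖f i‖) := by
  rw [norm_prod]
  exact Finset.prod_le_prod (fun i _ => norm_nonneg _)
    (fun i _ => (norm_add_le _ _).trans (by simp))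

lemma norm_prod_one_add_sub_one_le {ι : Type*} (s : Finset ι) (f : ι → ℂ) :
    ‖∏ i ∈ s, (1 + f i) - 1‖ ≤ ∏ i ∈ s, (1 + ‖f i‖) - 1 := by
  induction s using Finset.cons_induction with
  | empty => simp
  | cons a s ha ih =>
    rw [Finset.prod_cons, Finset.prod_cons]
    have h1 : (1 + f a) * ∏ i ∈ s, (1 + f i) - 1
        = (∏ i ∈ s, (1 + f i) - 1) + f a * ∏ i ∈ s, (1 + f i) := by ring
    rw [h1]
    calc ‖(∏ i ∈ s, (1 + f i) - 1) + f a * ∏ i ∈ s, (1 + f i)‖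
        ≤ ‖∏ i ∈ s, (1 + f i) - 1‖ + ‖f a * ∏ i ∈ s, (1 + f i)‖ := norm_add_le _ _
      _ = ‖∏ i ∈ s, (1 + f i) - 1‖ + ‖f a‖ * ‖∏ i ∈ s, (1 + f i)‖ := by rw [norm_mul]
      _ ≤ (∏ i ∈ s, (1 + ‖f i‖) - 1) + ‖f a‖ * ∏ i ∈ s, (1 + ‖f i‖) :=
          add_le_add ih (mul_le_mul_of_nonneg_left (norm_prod_one_add_le s f) (norm_nonneg _))
      _ = (1 + ‖f a‖) * ∏ i ∈ s, (1 + ‖f i‖) - 1 := by ring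

lemma prod_one_add_le_exp {ι : Type*} (s : Finset ι) (b : ι → ℝ) (hb : ∀ i, 0 ≤ b i) :
    ∏ i ∈ s, (1 + b i) ≤ Real.exp (∑ i ∈ s, b i) := by
  rw [Real.exp_sum]
  exact Finset.prod_le_prod (fun i _ => by have := hb i; linarith)
    (fun i _ => by linarith [Real.add_one_le_exp (b i)])

lemma euler_tlu (R : ℝ) (hR : 0 < R) :
    TendstoLocallyUniformlyOn
      (fun (n : ℕ) (z : ℂ) => ↑π * z * ∏ j ∈ Finset.range n, (1 - z ^ 2 / ((j : ℂ) + 1) ^ 2))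
      (fun z => Complex.sin (↑π * z)) atTop (Metric.ball 0 R) := by
  set Fn : ℕ → ℂ → ℂ :=
    fun n z => ↑π * z * ∏ j ∈ Finset.range n, (1 - z ^ 2 / ((j : ℂ) + 1) ^ 2) with hFn
  have hb0 : ∀ j : ℕ, (0:ℝ) ≤ R ^ 2 / ((j : ℝ) + 1) ^ 2 := fun j => by positivity
  set b : ℕ → ℝ := fun j => R ^ 2 / ((j : ℝ) + 1) ^ 2 with hbdef
  have hbsum : Summable b := by
    have h1 : Summable (fun n : ℕ => 1 / (n : ℝ) ^ 2) :=
      Real.summable_one_div_nat_pow.mpr one_lt_two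
    have h2 : Summable (fun n : ℕ => 1 / ((n : ℝ) + 1) ^ 2) := by
      have := (summable_nat_add_iff 1).mpr h1
      simpa [Nat.cast_add] using this
    simpa [hbdef, div_eq_mul_inv, one_mul] using h2.mul_left (R ^ 2)
  have hnj : ∀ j : ℕ, ‖((j : ℂ) + 1)‖ = (j : ℝ) + 1 := fun j => by
    have h : ((j : ℂ) + 1) = ((j + 1 : ℕ) : ℂ) := by push_cast; ring
    rw [h, Complex.norm_natCast]; push_cast; ring
  have hfb : ∀ z ∈ Metric.ball (0:ℂ) R, ∀ j : ℕ, ‖-(z ^ 2 / ((j : ℂ) + 1) ^ 2)‖ ≤ b j := by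
    intro z hz j
    rw [norm_neg, norm_div, norm_pow, norm_pow, hnj]
    have hzR : ‖z‖ ≤ R := le_of_lt (mem_ball_zero_iff.mp hz)
    show ‖z‖ ^ 2 / ((j : ℝ) + 1) ^ 2 ≤ R ^ 2 / ((j : ℝ) + 1) ^ 2
    gcongr
  set C : ℝ := π * R * Real.exp (∑' j, b j) with hC
  have hCpos : 0 < C := by
    have := Real.pi_pos
    positivity
  have hprodb : ∀ s : Finset ℕ, ∏ j ∈ s, (1 + b j) ≤ Real.exp (∑' j, b j) := by
    intro s
    refine (prod_one_add_le_exp s b hb0).trans (Real.exp_le_exp.mpr ?_)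
    exact Summable.sum_le_tsum s (fun i _ => hb0 i) hbsum
  have hFb : ∀ m : ℕ, ∀ z ∈ Metric.ball (0:ℂ) R, ‖Fn m z‖ ≤ C := by
    intro m z hz
    have hzR : ‖z‖ ≤ R := le_of_lt (mem_ball_zero_iff.mp hz)
    have h1 : ‖Fn m z‖ = π * ‖z‖ * ‖∏ j ∈ Finset.range m, (1 - z ^ 2 / ((j : ℂ) + 1) ^ 2)‖ := by
      rw [hFn]; simp [norm_mul, Complex.norm_real, abs_of_pos Real.pi_pos]
    have h2 : ‖∏ j ∈ Finset.range m, (1 - z ^ 2 / ((j : ℂ) + 1) ^ 2)‖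
        ≤ Real.exp (∑' j, b j) := by
      have := norm_prod_one_add_le (Finset.range m) (fun j => -(z ^ 2 / ((j : ℂ) + 1) ^ 2))
      simp only [← sub_eq_add_neg] at this
      refine this.trans (le_trans (Finset.prod_le_prod (fun i _ => by positivity)
        (fun i _ => add_le_add_right (by simpa [norm_neg] using hfb z hz i) 1)) (hprodb _))
    rw [h1, hC]
    have hπz : π * ‖z‖ ≤ π * R := by nlinarith [Real.pi_pos]
    exact mul_le_mul hπz h2 (norm_nonneg _) (by positivity)
  have hps : CauchySeq (fun n => ∑ j ∈ Finset.range n, b j) :=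
    hbsum.hasSum.tendsto_sum_nat.cauchySeq
  have hcauchy : UniformCauchySeqOn Fn atTop (Metric.ball 0 R) := by
    rw [Metric.uniformCauchySeqOn_iff]
    intro ε hε
    have hεC : 0 < ε / C := div_pos hε hCpos
    have hδ : 0 < Real.log (1 + ε / C) := Real.log_pos (by linarith)
    obtain ⟨N, hN⟩ := Metric.cauchySeq_iff.mp hps _ hδ
    have key : ∀ m n : ℕ, N ≤ m → m ≤ n → ∀ z ∈ Metric.ball (0:ℂ) R,
        dist (Fn m z) (Fn n z) < ε := by
      intro m n hm hmn z hz
      have hdiff : Fn n z = Fn m z * ∏ j ∈ Finset.Ico m n, (1 - z ^ 2 / ((j : ℂ) + 1) ^ 2) := by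
        rw [hFn]
        simp only [mul_assoc]
        rw [← Finset.prod_range_mul_prod_Ico _ hmn]
      rw [dist_eq_norm, hdiff]
      have h3 : Fn m z - Fn m z * ∏ j ∈ Finset.Ico m n, (1 - z ^ 2 / ((j : ℂ) + 1) ^ 2)
          = -(Fn m z * ((∏ j ∈ Finset.Ico m n, (1 - z ^ 2 / ((j : ℂ) + 1) ^ 2)) - 1)) := by ring
      rw [h3, norm_neg, norm_mul]
      have h4 : ‖(∏ j ∈ Finset.Ico m n, (1 - z ^ 2 / ((j : ℂ) + 1) ^ 2)) - 1‖
          ≤ ∏ j ∈ Finset.Ico m n, (1 + b j) - 1 := by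
        have := _root_.norm_prod_one_add_sub_one_le (Finset.Ico m n)
          (fun j => -(z ^ 2 / ((j : ℂ) + 1) ^ 2))
        simp only [← sub_eq_add_neg] at this
        refine this.trans ?_
        have : ∏ j ∈ Finset.Ico m n, (1 + ‖-(z ^ 2 / ((j : ℂ) + 1) ^ 2)‖)
            ≤ ∏ j ∈ Finset.Ico m n, (1 + b j) :=
          Finset.prod_le_prod (fun i _ => by positivity)
            (fun i _ => add_le_add_right (hfb z hz i) 1)
        linarith
      have h5 : ∏ j ∈ Finset.Ico m n, (1 + b j) - 1 < ε / C := by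
        have hsum_lt : ∑ j ∈ Finset.Ico m n, b j < Real.log (1 + ε / C) := by
          have hd := hN n (le_trans hm hmn) m hm
          rw [Real.dist_eq] at hd
          have hsub : ∑ j ∈ Finset.Ico m n, b j
              = ∑ j ∈ Finset.range n, b j - ∑ j ∈ Finset.range m, b j :=
            (Finset.sum_Ico_eq_sub _ hmn)
          calc ∑ j ∈ Finset.Ico m n, b j
              ≤ |∑ j ∈ Finset.range n, b j - ∑ j ∈ Finset.range m, b j| := by
                rw [hsub]; exact le_abs_self _
            _ < Real.log (1 + ε / C) := hd
        have := (prod_one_add_le_exp (Finset.Ico m n) b hb0).trans_lt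
          ((Real.exp_lt_exp.mpr hsum_lt).trans_eq (Real.exp_log (by linarith)))
        linarith
      calc ‖Fn m z‖ * ‖(∏ j ∈ Finset.Ico m n, (1 - z ^ 2 / ((j : ℂ) + 1) ^ 2)) - 1‖
          ≤ C * (∏ j ∈ Finset.Ico m n, (1 + b j) - 1) := by
            apply mul_le_mul (hFb m z hz) h4 (norm_nonneg _) (le_of_lt hCpos)
        _ < C * (ε / C) := by
            apply mul_lt_mul_of_pos_left h5 hCpos
        _ = ε := by field_simp
    refine ⟨N, fun m hm n hn z hz => ?_⟩
    rcases le_total m n with h | h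
    · exact key m n hm h z hz
    · rw [dist_comm]; exact key n m hn h z hz
  exact (hcauchy.tendstoUniformlyOn_of_tendsto
    (fun z _ => Complex.tendsto_euler_sin_prod z)).tendstoLocallyUniformlyOn

lemma cot_series_complex (z : ℂ) (hz : ∀ m : ℤ, z ≠ (m : ℂ)) :
    Tendsto (fun n : ℕ => 1 / z + ∑ j ∈ Finset.range n, 2 * z / (z ^ 2 - ((j : ℂ) + 1) ^ 2))
      atTop (𝓝 (↑π * Complex.cot (↑π * z))) := by
  have hπ : (π : ℂ) ≠ 0 := Complex.ofReal_ne_zero.mpr Real.pi_ne_zero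
  have hsin : Complex.sin (↑π * z) ≠ 0 := by
    intro h
    rw [Complex.sin_eq_zero_iff] at h
    obtain ⟨k, hk⟩ := h
    have h2 : (π : ℂ) * z = (π : ℂ) * k := by rw [hk]; ring
    exact hz k (mul_left_cancel₀ hπ h2)
  have hz0 : z ≠ 0 := by simpa using hz 0
  have hfac : ∀ j : ℕ, (1 : ℂ) - z ^ 2 / ((j : ℂ) + 1) ^ 2 ≠ 0 := by
    intro j h
    have hj : ((j : ℂ) + 1) ≠ 0 := by
      have : ((j : ℂ) + 1) = ((j + 1 : ℕ) : ℂ) := by push_cast; ring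
      rw [this]
      exact Nat.cast_ne_zero.mpr (Nat.succ_ne_zero j)
    have h2 : z ^ 2 = ((j : ℂ) + 1) ^ 2 := by
      field_simp at h
      linear_combination -h
    have h3 : (z - ((j : ℂ) + 1)) * (z + ((j : ℂ) + 1)) = 0 := by linear_combination h2
    rcases mul_eq_zero.mp h3 with h4 | h4
    · exact hz ((j : ℤ) + 1) (by push_cast; linear_combination h4)
    · exact hz (-((j : ℤ) + 1)) (by push_cast; linear_combination h4)
  have hden : ∀ j : ℕ, z ^ 2 - ((j : ℂ) + 1) ^ 2 ≠ 0 := by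
    intro j h
    apply hfac j
    have hj : ((j : ℂ) + 1) ≠ 0 := by
      have : ((j : ℂ) + 1) = ((j + 1 : ℕ) : ℂ) := by push_cast; ring
      rw [this]; exact Nat.cast_ne_zero.mpr (Nat.succ_ne_zero j)
    field_simp
    linear_combination -h
  set R : ℝ := ‖z‖ + 1 with hR
  have hRpos : 0 < R := by positivity
  have hzball : z ∈ Metric.ball (0 : ℂ) R := by
    rw [mem_ball_zero_iff]; simp [hR]
  have htlu := euler_tlu R hRpos
  have hdiff : ∀ n : ℕ, DifferentiableOn ℂ
      (fun z : ℂ => ↑π * z * ∏ j ∈ Finset.range n, (1 - z ^ 2 / ((j : ℂ) + 1) ^ 2))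
      (Metric.ball 0 R) := by
    intro n
    apply Differentiable.differentiableOn
    apply Differentiable.mul
    · exact (differentiable_id.const_mul _)
    · apply Differentiable.fun_finsetProd
      intro j _
      apply Differentiable.const_sub
      exact (differentiable_pow 2).div_const _
  have happ := Complex.logDeriv_tendsto
    Metric.isOpen_ball hzball htlu
    (Filter.Eventually.of_forall hdiff) hsin
  -- identify logDeriv of limit
  have hlog_g : logDeriv (fun z : ℂ => Complex.sin (↑π * z)) z = ↑π * Complex.cot (↑π * z) := by
    have : (fun z : ℂ => Complex.sin (↑π * z)) = Complex.sin ∘ (fun w : ℂ => ↑π * w) := rfl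
    rw [this, logDeriv_comp (Complex.differentiable_sin _) (by fun_prop), Complex.logDeriv_sin]
    have hd : deriv (fun w : ℂ => (π : ℂ) * w) z = ↑π :=
      ((hasDerivAt_id z).const_mul (π : ℂ)).deriv.trans (mul_one _)
    rw [hd, mul_comm]
  -- identify logDeriv of approximants
  have hlog_F : ∀ n : ℕ, logDeriv
      (fun z : ℂ => ↑π * z * ∏ j ∈ Finset.range n, (1 - z ^ 2 / ((j : ℂ) + 1) ^ 2)) z
      = 1 / z + ∑ j ∈ Finset.range n, 2 * z / (z ^ 2 - ((j : ℂ) + 1) ^ 2) := by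
    intro n
    rw [logDeriv_mul z (by simp [hπ, hz0]) ?_ (by fun_prop) ?_]
    · congr 1
      · rw [logDeriv_const_mul z _ hπ, logDeriv_id']
      · rw [logDeriv_prod]
        · apply Finset.sum_congr rfl
          intro j _
          have hj : ((j : ℂ) + 1) ≠ 0 := by
            have : ((j : ℂ) + 1) = ((j + 1 : ℕ) : ℂ) := by push_cast; ring
            rw [this]; exact Nat.cast_ne_zero.mpr (Nat.succ_ne_zero j)
          have hd : HasDerivAt (fun w : ℂ => 1 - w ^ 2 / ((j : ℂ) + 1) ^ 2)
              (-(2 * z / ((j : ℂ) + 1) ^ 2)) z := by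
            have := ((hasDerivAt_pow 2 z).div_const (((j : ℂ) + 1) ^ 2)).const_sub 1
            simpa [pow_one] using this
          rw [logDeriv_apply, hd.deriv]
          rw [div_eq_div_iff (hfac j) (hden j)]
          field_simp
          ring
        · intro i _; exact hfac i
        · intro i _
          apply DifferentiableAt.const_sub
          exact (differentiableAt_pow 2).div_const _
    · rw [Finset.prod_ne_zero_iff]
      intro i _; exact hfac i
    · apply DifferentiableAt.fun_finsetProd
      intro j _
      apply DifferentiableAt.const_sub
      exact (differentiableAt_pow 2).div_const _
  rw [← hlog_g]
  exact happ.congr (fun n => hlog_F n)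

lemma summable_of_abs_le_div (c : ℝ) {F : ℕ → ℝ}
    (h : ∀ᶠ j in atTop, |F j| ≤ c / ((j : ℝ) + 1) ^ 2) : Summable F := by
  have h1 : Summable (fun n : ℕ => 1 / (n : ℝ) ^ 2) :=
    Real.summable_one_div_nat_pow.mpr one_lt_two
  have h2 : Summable (fun n : ℕ => c / ((n : ℝ) + 1) ^ 2) := by
    have h3 := ((summable_nat_add_iff 1).mpr h1).mul_left c
    simpa [Nat.cast_add, mul_one_div, div_eq_mul_inv] using h3
  apply Summable.of_norm_bounded_eventually h2
  rwa [Nat.cofinite_eq_atTop]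

lemma cot_series_real (x : ℝ) (hx : ∀ m : ℤ, x ≠ m) :
    HasSum (fun j : ℕ => 2 * x / (x ^ 2 - ((j : ℝ) + 1) ^ 2))
      (π * Real.cot (π * x) - 1 / x) := by
  have hsum : Summable (fun j : ℕ => 2 * x / (x ^ 2 - ((j : ℝ) + 1) ^ 2)) := by
    apply summable_of_abs_le_div (4 * |x|)
    filter_upwards [eventually_ge_atTop ⌈2 * x ^ 2⌉₊] with j hj
    have hj2 : 2 * x ^ 2 ≤ (j : ℝ) := (Nat.le_ceil _).trans (by exact_mod_cast hj)
    have hd : ((j : ℝ) + 1) ^ 2 / 2 ≤ ((j : ℝ) + 1) ^ 2 - x ^ 2 := by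
      nlinarith [Nat.cast_nonneg (α := ℝ) j]
    have hdpos : 0 < ((j : ℝ) + 1) ^ 2 - x ^ 2 := by
      have : (0:ℝ) < ((j : ℝ) + 1) ^ 2 / 2 := by positivity
      linarith
    rw [abs_div, abs_mul]
    have habs : |x ^ 2 - ((j : ℝ) + 1) ^ 2| = ((j : ℝ) + 1) ^ 2 - x ^ 2 := by
      rw [abs_sub_comm, abs_of_pos hdpos]
    rw [habs, div_le_div_iff₀ hdpos (by positivity)]
    have h2 : |(2:ℝ)| = 2 := by norm_num
    rw [h2]
    nlinarith [abs_nonneg x]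
  have hz : ∀ m : ℤ, (x : ℂ) ≠ (m : ℂ) := fun m h => hx m (by exact_mod_cast h)
  have ht := cot_series_complex x hz
  have hcast : ∀ n : ℕ,
      (((1 / x + ∑ j ∈ Finset.range n, 2 * x / (x ^ 2 - ((j : ℝ) + 1) ^ 2) : ℝ)) : ℂ)
      = 1 / (x : ℂ) + ∑ j ∈ Finset.range n, 2 * (x : ℂ) / ((x : ℂ) ^ 2 - ((j : ℂ) + 1) ^ 2) := by
    intro n
    push_cast
    ring
  have hcot : (((π * Real.cot (π * x) : ℝ)) : ℂ) = ↑π * Complex.cot (↑π * ↑x) := by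
    push_cast [Complex.ofReal_cot]
    ring
  have htr : Tendsto (fun n : ℕ => 1 / x + ∑ j ∈ Finset.range n, 2 * x / (x ^ 2 - ((j : ℝ) + 1) ^ 2))
      atTop (𝓝 (π * Real.cot (π * x))) := by
    rw [← Filter.tendsto_ofReal_iff]
    rw [hcot]
    exact ht.congr (fun n => (hcast n).symm)
  have h2 := hsum.hasSum.tendsto_sum_nat
  have h3 : Tendsto (fun n : ℕ => 1 / x + ∑ j ∈ Finset.range n, 2 * x / (x ^ 2 - ((j : ℝ) + 1) ^ 2))
      atTop (𝓝 (1 / x + ∑' j : ℕ, 2 * x / (x ^ 2 - ((j : ℝ) + 1) ^ 2))) :=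
    tendsto_const_nhds.add h2
  have h4 : 1 / x + ∑' j : ℕ, 2 * x / (x ^ 2 - ((j : ℝ) + 1) ^ 2) = π * Real.cot (π * x) :=
    tendsto_nhds_unique h3 htr
  have h5 : ∑' j : ℕ, 2 * x / (x ^ 2 - ((j : ℝ) + 1) ^ 2) = π * Real.cot (π * x) - 1 / x := by
    linarith
  exact h5 ▸ hsum.hasSum

lemma summable_thm_aux (x a : ℝ) (ε : ℝ) (hε : |ε| = 1) :
    Summable (fun j : ℕ => (a - x) / ((x - ε * ((j : ℝ) + 1)) * (a - ε * ((j : ℝ) + 1)))) := by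
  apply summable_of_abs_le_div (4 * |a - x|)
  filter_upwards [eventually_ge_atTop ⌈2 * |x| + 2 * |a|⌉₊] with j hj
  have hj2 : 2 * |x| + 2 * |a| ≤ (j : ℝ) := (Nat.le_ceil _).trans (by exact_mod_cast hj)
  have h0 : |ε * ((j : ℝ) + 1)| = (j : ℝ) + 1 := by
    rw [abs_mul, hε, one_mul, abs_of_nonneg (by positivity)]
  have hx1 : ((j : ℝ) + 1) / 2 ≤ |x - ε * ((j : ℝ) + 1)| := by
    have h1 := abs_sub_abs_le_abs_sub (ε * ((j : ℝ) + 1)) x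
    rw [h0] at h1
    rw [abs_sub_comm]
    have : |x| ≤ ((j : ℝ) + 1) / 2 := by nlinarith [abs_nonneg x, abs_nonneg a]
    linarith
  have ha1 : ((j : ℝ) + 1) / 2 ≤ |a - ε * ((j : ℝ) + 1)| := by
    have h1 := abs_sub_abs_le_abs_sub (ε * ((j : ℝ) + 1)) a
    rw [h0] at h1
    rw [abs_sub_comm]
    have : |a| ≤ ((j : ℝ) + 1) / 2 := by nlinarith [abs_nonneg x, abs_nonneg a]
    linarith
  rw [abs_div, abs_mul]
  have hjpos : (0:ℝ) < ((j : ℝ) + 1) / 2 := by positivity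
  have hd1 : 0 < |x - ε * ((j : ℝ) + 1)| := lt_of_lt_of_le hjpos hx1
  have hd2 : 0 < |a - ε * ((j : ℝ) + 1)| := lt_of_lt_of_le hjpos ha1
  rw [div_le_div_iff₀ (by positivity) (by positivity)]
  have hmul : ((j : ℝ) + 1) / 2 * (((j : ℝ) + 1) / 2)
      ≤ |x - ε * ((j : ℝ) + 1)| * |a - ε * ((j : ℝ) + 1)| :=
    mul_le_mul hx1 ha1 (le_of_lt hjpos) (abs_nonneg _)
  nlinarith [abs_nonneg (a - x)]

theorem cot_diff_sum (x a : ℝ) (hx : ∀ m : ℤ, x ≠ m) (ha : ∀ m : ℤ, a ≠ m) :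
    Summable (fun n : ℤ => (a - x) / ((x - n) * (a - n))) ∧
      π * Real.cot (π * x) - π * Real.cot (π * a) =
        ∑' n : ℤ, (a - x) / ((x - n) * (a - n)) := by
  set f : ℤ → ℝ := fun n => (a - x) / ((x - n) * (a - n)) with hf
  have hxn : ∀ n : ℤ, x - (n : ℝ) ≠ 0 := fun n => sub_ne_zero.2 (hx n)
  have han : ∀ n : ℤ, a - (n : ℝ) ≠ 0 := fun n => sub_ne_zero.2 (ha n)
  have hx0 : x ≠ 0 := by simpa using hx 0
  have ha0 : a ≠ 0 := by simpa using ha 0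
  have hpos : Summable (fun m : ℕ => f ((m : ℤ) + 1)) := by
    apply (summable_thm_aux x a 1 (by norm_num)).congr
    intro m
    simp only [hf]
    push_cast
    ring
  have hneg : Summable (fun m : ℕ => f (-((m : ℤ) + 1))) := by
    apply (summable_thm_aux x a (-1) (by norm_num)).congr
    intro m
    simp only [hf]
    push_cast
    ring
  have hx' := cot_series_real x hx
  have ha' := cot_series_real a ha
  have key : ∀ m : ℕ, f ((m : ℤ) + 1) + f (-((m : ℤ) + 1))
      = 2 * x / (x ^ 2 - ((m : ℝ) + 1) ^ 2) - 2 * a / (a ^ 2 - ((m : ℝ) + 1) ^ 2) := by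
    intro m
    have h1 : x - ((m : ℝ) + 1) ≠ 0 := by
      have := hxn ((m : ℤ) + 1); push_cast at this; exact this
    have h2 : x + ((m : ℝ) + 1) ≠ 0 := by
      have := hxn (-((m : ℤ) + 1)); push_cast at this
      intro h; apply this; linarith
    have h3 : a - ((m : ℝ) + 1) ≠ 0 := by
      have := han ((m : ℤ) + 1); push_cast at this; exact this
    have h4 : a + ((m : ℝ) + 1) ≠ 0 := by
      have := han (-((m : ℤ) + 1)); push_cast at this
      intro h; apply this; linarith
    simp only [hf]
    push_cast
    have hx2 : x ^ 2 - ((m : ℝ) + 1) ^ 2 ≠ 0 := by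
      intro h
      rcases mul_eq_zero.mp (show (x - ((m:ℝ)+1)) * (x + ((m:ℝ)+1)) = 0 by linear_combination h)
        with h' | h'
      · exact h1 h'
      · exact h2 h'
    have ha2 : a ^ 2 - ((m : ℝ) + 1) ^ 2 ≠ 0 := by
      intro h
      rcases mul_eq_zero.mp (show (a - ((m:ℝ)+1)) * (a + ((m:ℝ)+1)) = 0 by linear_combination h)
        with h' | h'
      · exact h3 h'
      · exact h4 h'
    simp only [sub_neg_eq_add]
    rw [div_add_div _ _ (mul_ne_zero h1 h3) (mul_ne_zero h2 h4),
      div_sub_div _ _ hx2 ha2,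
      div_eq_div_iff (mul_ne_zero (mul_ne_zero h1 h3) (mul_ne_zero h2 h4))
        (mul_ne_zero hx2 ha2)]
    ring
  have hcomb : HasSum (fun m : ℕ => f ((m : ℤ) + 1) + f (-((m : ℤ) + 1)))
      ((π * Real.cot (π * x) - 1 / x) - (π * Real.cot (π * a) - 1 / a)) := by
    have hxy := hx'.sub ha'
    rwa [show (fun m : ℕ => 2 * x / (x ^ 2 - ((m : ℝ) + 1) ^ 2)
        - 2 * a / (a ^ 2 - ((m : ℝ) + 1) ^ 2))
      = fun m : ℕ => f ((m : ℤ) + 1) + f (-((m : ℤ) + 1)) from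
        funext (fun m => (key m).symm)] at hxy
  have htotal : HasSum f ((∑' m : ℕ, f ((m : ℤ) + 1)) + f 0 + ∑' m : ℕ, f (-((m : ℤ) + 1))) :=
    hpos.hasSum.of_add_one_of_neg_add_one hneg.hasSum
  have hcomb' : HasSum (fun m : ℕ => f ((m : ℤ) + 1) + f (-((m : ℤ) + 1)))
      ((∑' m : ℕ, f ((m : ℤ) + 1)) + ∑' m : ℕ, f (-((m : ℤ) + 1))) :=
    hpos.hasSum.add hneg.hasSum
  have huniq : (∑' m : ℕ, f ((m : ℤ) + 1)) + ∑' m : ℕ, f (-((m : ℤ) + 1))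
      = (π * Real.cot (π * x) - 1 / x) - (π * Real.cot (π * a) - 1 / a) :=
    hcomb'.unique hcomb
  have hf0 : f 0 = 1 / x - 1 / a := by
    simp only [hf, Int.cast_zero, sub_zero]
    field_simp
  refine ⟨htotal.summable, ?_⟩
  rw [htotal.tsum_eq]
  rw [hf0]
  linarith
end

section
/- π = 2 · ∑_{n=-∞}^{∞} 1/((2n−1)(4n−1)), where the sum over all integers n converges absolutely. -/
open Real Filter Finset Topology

lemma sum_range_two_mul (g : ℕ → ℝ) (k : ℕ) :
    ∑ i ∈ range (2 * k), g i = ∑ m ∈ range k, (g (2 * m) + g (2 * m + 1)) := by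
  induction k with
  | zero => simp
  | succ k ih =>
    rw [Finset.sum_range_succ, ← ih, Nat.mul_succ, Finset.sum_range_succ,
      Finset.sum_range_succ]
    ring

lemma pair_hasSum : HasSum (fun m : ℕ => (2 : ℝ) / ((4 * m + 1) * (4 * m + 3))) (π / 4) := by
  have hnn : ∀ m : ℕ, 0 ≤ (2 : ℝ) / ((4 * m + 1) * (4 * m + 3)) := fun m => by positivity
  rw [hasSum_iff_tendsto_nat_of_nonneg hnn]
  have h2 : Tendsto (fun k : ℕ => ∑ i ∈ range (2 * k), (-1 : ℝ) ^ i / (2 * i + 1))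
      atTop (𝓝 (π / 4)) :=
    Real.tendsto_sum_pi_div_four.comp (tendsto_id.const_mul_atTop' two_pos)
  refine h2.congr fun k => ?_
  rw [sum_range_two_mul]
  refine Finset.sum_congr rfl fun m _ => ?_
  have h1 : ((4 : ℝ) * m + 1) ≠ 0 := by positivity
  have h3 : ((4 : ℝ) * m + 3) ≠ 0 := by positivity
  rw [pow_succ, pow_mul]
  push_cast
  field_simp
  ring

theorem pi_eq_two_mul_sum (_ : True) :
    Summable (fun n : ℤ => (1 : ℝ) / ((2 * n - 1) * (4 * n - 1))) ∧
      π = 2 * ∑' n : ℤ, (1 : ℝ) / ((2 * n - 1) * (4 * n - 1)) := by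
  set f : ℤ → ℝ := fun n => (1 : ℝ) / ((2 * n - 1) * (4 * n - 1)) with hf
  have hd : ∀ n : ℤ, (n : ℝ) ^ 2 + 1 ≤ (2 * (n : ℝ) - 1) * (4 * n - 1) := by
    intro n
    have h : (n : ℤ) ^ 2 + 1 ≤ (2 * n - 1) * (4 * n - 1) := by
      rcases le_or_gt n 0 with h | h <;> nlinarith
    exact_mod_cast h
  have hpos : ∀ n : ℤ, (0 : ℝ) < (2 * (n : ℝ) - 1) * (4 * n - 1) := by
    intro n
    nlinarith [hd n, sq_nonneg (n : ℝ)]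
  have hs : Summable f := by
    refine Summable.of_norm_bounded_eventually (g := fun n : ℤ => 1 / (n : ℝ) ^ 2)
      (Real.summable_one_div_int_pow.2 one_lt_two) ?_
    filter_upwards [(Set.finite_singleton (0 : ℤ)).compl_mem_cofinite] with n hn
    have hn0 : (0 : ℝ) < (n : ℝ) ^ 2 := by
      have : (n : ℝ) ≠ 0 := Int.cast_ne_zero.2 hn
      positivity
    have hfnn : (0 : ℝ) ≤ f n := le_of_lt (by simpa [hf] using one_div_pos.2 (hpos n))
    rw [Real.norm_eq_abs, abs_of_nonneg hfnn, hf]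
    exact one_div_le_one_div_of_le hn0 (by linarith [hd n])
  refine ⟨hs, ?_⟩
  have s1 : Summable (fun m : ℕ => f m) := hs.comp_injective Nat.cast_injective
  have s2 : Summable (fun m : ℕ => f (-(m + 1))) :=
    hs.comp_injective (fun a b h => by
      simp only [neg_inj, add_left_inj, Nat.cast_inj] at h; exact h)
  have hpair : ∀ m : ℕ, f (m + 1) + f (-m) = 2 * (2 / ((4 * (m : ℝ) + 1) * (4 * m + 3))) := by
    intro m
    have hm : (0 : ℝ) ≤ (m : ℝ) := Nat.cast_nonneg m
    have hAB : ((2 * ((m : ℝ) + 1) - 1) * (4 * ((m : ℝ) + 1) - 1)) ≠ 0 := by nlinarith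
    have hCD : ((2 * (-(m : ℝ)) - 1) * (4 * (-(m : ℝ)) - 1)) ≠ 0 := by nlinarith
    have hP : ((4 * (m : ℝ) + 1) * (4 * m + 3)) ≠ 0 := by positivity
    simp only [hf]
    push_cast
    rw [div_add_div _ _ hAB hCD, mul_div_assoc', div_eq_div_iff (mul_ne_zero hAB hCD) hP]
    ring
  have hps : HasSum (fun m : ℕ => f (m + 1) + f (-m)) (π / 2) := by
    have h := pair_hasSum.mul_left 2
    have h2 : (2 : ℝ) * (π / 4) = π / 2 := by ring
    rw [h2] at h
    exact h.congr_fun fun m => hpair m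
  have t1 : Summable (fun m : ℕ => f (m + 1)) := by
    have := (summable_nat_add_iff 1).2 s1
    exact this.congr fun m => by push_cast; rfl
  have t2 : Summable (fun m : ℕ => f (-m)) :=
    hs.comp_injective (neg_injective.comp Nat.cast_injective)
  have hsum_pair : (∑' m : ℕ, f (m + 1)) + (∑' m : ℕ, f (-m)) = π / 2 := by
    rw [← Summable.tsum_add t1 t2]
    exact hps.tsum_eq
  have e1 : (∑' m : ℕ, f m) = f 0 + ∑' m : ℕ, f (m + 1) := by
    rw [Summable.tsum_eq_zero_add s1]
    norm_num
  have e2 : (∑' m : ℕ, f (-m)) = f 0 + ∑' m : ℕ, f (-(m + 1)) := by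
    rw [Summable.tsum_eq_zero_add t2]
    norm_num
  have htot : HasSum f ((∑' m : ℕ, f m) + ∑' m : ℕ, f (-(m + 1))) :=
    HasSum.of_nat_of_neg_add_one s1.hasSum s2.hasSum
  have hval : (∑' n : ℤ, f n) = π / 2 := by
    rw [htot.tsum_eq]
    have h3 : (∑' m : ℕ, f m) + (∑' m : ℕ, f (-(m + 1))) =
        (∑' m : ℕ, f (m + 1)) + (∑' m : ℕ, f (-m)) := by
      rw [e1, e2]; ring
    rw [h3, hsum_pair]
  rw [hval]; ring
end

section
/- For all real x with 0 < |x| < 1, x·g(x) = −(x+1)·g(x+1), where g(x) = ∏_{n=1}^{∞} (1 − x²/n²). -/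
open Real Filter

theorem functional_equation_g (x gx gx1 : ℝ) (h0 : 0 < |x|) (h1 : |x| < 1)
    (hg : Tendsto (fun N : ℕ => ∏ n ∈ Finset.range N, (1 - x ^ 2 / ((n : ℝ) + 1) ^ 2))
      atTop (nhds gx))
    (hg1 : Tendsto (fun N : ℕ => ∏ n ∈ Finset.range N, (1 - (x + 1) ^ 2 / ((n : ℝ) + 1) ^ 2))
      atTop (nhds gx1)) :
    x * gx = -(x + 1) * gx1 := by
  have e1 : π * x * gx = Real.sin (π * x) :=
    tendsto_nhds_unique ((hg.const_mul (π * x)).congr (fun n => by ring))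
      (Real.tendsto_euler_sin_prod x)
  have e2 : π * (x + 1) * gx1 = Real.sin (π * (x + 1)) :=
    tendsto_nhds_unique ((hg1.const_mul (π * (x + 1))).congr (fun n => by ring))
      (Real.tendsto_euler_sin_prod (x + 1))
  have e3 : Real.sin (π * (x + 1)) = -Real.sin (π * x) := by
    rw [mul_add, mul_one, Real.sin_add_pi]
  have hπ := Real.pi_ne_zero
  have key : π * (x * gx) = π * (-(x + 1) * gx1) := by
    have h2 : π * (-(x + 1) * gx1) = -(π * (x + 1) * gx1) := by ring
    rw [← mul_assoc, e1, h2, e2, e3, neg_neg]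
  exact mul_left_cancel₀ hπ key
end
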